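/- arXiv:math/0603401 — 5 statements merged into one kernel-verified Lean document; each statement's English description precedes it below -/
import Mathlib

section
/- Fix an integer d ≥ 1. For each n ≥ 1 define f_n : ℝ → ℝ to be the function which is constant on each interval [ (k − n/d)/√(n/d), (k+1 − n/d)/√(n/d) ) for every integer k, and which satisfies f_n( (k − n/d)/√(n/d) ) = √(n/d) · (n/d)^k e^{−n/d} / k! if k is a non-negative integer, and 0 if k is a negative integer. For a function f : ℝ → ℝ define Δ_n f (y) = ( f(y + √(d/n)) − f(y) ) / √(d/n), and let Δ_n^α denote the α-fold iteration of Δ_n. Then for every integer α ≥ 0 there exists a polynomial P_α (with real coefficients, taking positive values on ℝ) such that | (Δ_n^α f_n)(y) | < P_α(y) · e^{−|y|} holds for all n ≥ 1 and all y ∈ ℝ. -/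
open Filter

/-- The function `f_n : ℝ → ℝ` of the paper: it is constant on each interval
`[(k - n/d)/√(n/d), (k+1 - n/d)/√(n/d))`, `k ∈ ℤ`, and at the left endpoint of such an
interval it takes the value `√(n/d) · (n/d)^k e^{-n/d} / k!` if `k ≥ 0` and `0` if `k < 0`. -/
noncomputable def fn (d n : ℕ) (y : ℝ) : ℝ :=
  let c : ℝ := (n : ℝ) / d
  let k : ℤ := ⌊y * Real.sqrt c + c⌋
  if 0 ≤ k then Real.sqrt c * c ^ k.toNat * Real.exp (-c) / (k.toNat.factorial : ℝ) else 0

/-- The difference operator `Δ_n f (y) = (f(y + √(d/n)) - f(y)) / √(d/n)`. -/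
noncomputable def Dn (d n : ℕ) (f : ℝ → ℝ) : ℝ → ℝ :=
  fun y => (f (y + Real.sqrt ((d : ℝ) / n)) - f y) / Real.sqrt ((d : ℝ) / n)

namespace IDF


/-- Charlier-type polynomials. -/
noncomputable def Q (c : ℝ) : ℕ → ℝ → ℝ
  | 0 => fun _ => 1
  | (α+1) => fun t => c * Q c α t - t * Q c α (t-1)

/-- m-fold backward difference of `Q c α`. -/
noncomputable def R (c : ℝ) (α : ℕ) : ℕ → ℝ → ℝ
  | 0 => Q c α
  | (m+1) => fun t => R c α m t - R c α m (t-1)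

noncomputable def g (c : ℝ) (k : ℤ) : ℝ :=
  if 0 ≤ k then c ^ k.toNat / (k.toNat.factorial : ℝ) else 0

lemma R_zero (c : ℝ) (α : ℕ) : R c α 0 = Q c α := rfl

lemma R_succ_m (c : ℝ) (α m : ℕ) (t : ℝ) :
    R c α (m+1) t = R c α m t - R c α m (t-1) := rfl

lemma R_mul_aux (c : ℝ) (α m : ℕ) (u : ℝ) :
    (m : ℝ) * R c α m u = m * (R c α (m-1) u - R c α (m-1) (u-1)) := by
  cases m with
  | zero => simp
  | succ m => simp only [Nat.add_sub_cancel, R_succ_m]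

lemma R_rec (c : ℝ) (α : ℕ) : ∀ m : ℕ, ∀ t : ℝ,
    R c (α+1) m t = c * R c α (m+1) t + (c - t) * R c α m (t-1)
      - m * R c α (m-1) (t-2) := by
  intro m
  induction m with
  | zero =>
    intro t
    show Q c (α+1) t = _
    show c * Q c α t - t * Q c α (t-1) = _
    rw [R_succ_m]
    simp [R_zero]
    ring
  | succ m ih =>
    intro t
    rw [R_succ_m, ih t, ih (t-1)]
    have h4 : (m:ℝ) * R c α (m-1) (t-2) - (m:ℝ) * R c α (m-1) (t-1-2)
        = (m:ℝ) * R c α m (t-2) := by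
      have h := R_mul_aux c α m (t-2)
      have h5 : t - 2 - 1 = t - 1 - 2 := by ring
      rw [h5] at h
      linarith [h]
    simp only [Nat.add_sub_cancel, R_succ_m]
    push_cast
    ring_nf
    ring_nf at h4
    linarith [h4]

lemma R_vanish (c : ℝ) : ∀ α m : ℕ, α < m → ∀ t : ℝ, R c α m t = 0 := by
  intro α
  induction α with
  | zero =>
    intro m hm t
    induction m generalizing t with
    | zero => omega
    | succ m ih =>
      rw [R_succ_m]
      cases Nat.eq_zero_or_pos m with
      | inl h => subst h; simp [R_zero, Q]
      | inr h => rw [ih (by omega), ih (by omega)]; ring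
  | succ α ih =>
    intro m hm t
    rw [R_rec]
    rw [ih (m+1) (by omega), ih m (by omega)]
    have : m - 1 > α := by omega
    rw [ih (m-1) (by omega)]
    ring


lemma R_bound (d : ℕ) (hd : 1 ≤ d) (α : ℕ) :
    ∃ B : ℝ, 0 < B ∧ ∀ c : ℝ, 0 < c → 1 ≤ c * d → ∀ m j : ℕ, m + j = α → ∀ t : ℝ,
      |R c α m t| ≤ B * (1 + |t - c| / Real.sqrt c) ^ α * Real.sqrt c ^ j := by
  induction α with
  | zero =>
    refine ⟨1, one_pos, fun c hc hcd m j hmj t => ?_⟩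
    obtain ⟨rfl, rfl⟩ : m = 0 ∧ j = 0 := by omega
    simp [R_zero, Q]
  | succ α ih =>
    obtain ⟨B, hB, IH⟩ := ih
    refine ⟨B * (α+3) * (1 + 2*Real.sqrt d)^(α+1), by positivity, ?_⟩
    intro c hc hcd m j hmj t
    have hs : 0 < Real.sqrt c := Real.sqrt_pos.2 hc
    set s : ℝ := Real.sqrt c with hs_def
    have hsd : 1 ≤ s * Real.sqrt d := by
      have h1 : (1:ℝ) = Real.sqrt 1 := by simp
      rw [h1, ← Real.sqrt_mul hc.le]
      exact Real.sqrt_le_sqrt (by exact_mod_cast hcd)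
    have hc2 : c = s^2 := (Real.sq_sqrt hc.le).symm
    set x : ℝ := |t - c| / s with hx_def
    have hx0 : 0 ≤ x := by positivity
    have hd0 : (0:ℝ) ≤ Real.sqrt d := Real.sqrt_nonneg d
    have key : ∀ u : ℝ, |u - c| ≤ |t - c| + 2 →
        (1 + |u - c| / s) ≤ (1 + x) * (1 + 2 * Real.sqrt d) := by
      intro u hu
      have h1 : |u - c|/s ≤ (|t-c| + 2)/s := by gcongr
      have h2 : (|t-c|+2)/s = x + 2/s := by rw [add_div]
      have h3 : 2/s ≤ 2*Real.sqrt d := by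
        rw [div_le_iff₀ hs]
        nlinarith
      nlinarith
    set D : ℝ := (1 + x) * (1 + 2 * Real.sqrt d) with hD_def
    have hD1 : (1:ℝ) ≤ 1 + 2*Real.sqrt d := by linarith
    have h1x : (1:ℝ) ≤ 1 + x := by linarith
    set M : ℝ := B * (1 + 2*Real.sqrt d)^(α+1) * (1+x)^(α+1) * s^j with hM_def
    have hM0 : 0 ≤ M := by positivity
    have powD : ∀ u : ℝ, 0 ≤ u → u ≤ D →
        u ^ α ≤ (1 + 2*Real.sqrt d)^(α+1) * (1+x)^(α+1) := by
      intro u hu0 huD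
      calc u ^ α ≤ D ^ α := by gcongr
        _ = (1+x)^α * (1 + 2*Real.sqrt d)^α := by rw [hD_def, mul_pow]
        _ ≤ (1 + 2*Real.sqrt d)^(α+1) * (1+x)^(α+1) := by
            rw [mul_comm]
            gcongr <;> [omega; omega]
    -- Term 1 : |c * R c α (m+1) t| ≤ M
    have T1 : |c * R c α (m+1) t| ≤ M := by
      rcases j with _ | _ | j'
      · have : α < m + 1 := by omega
        rw [R_vanish c α (m+1) this t]
        simpa using hM0
      · have : α < m + 1 := by omega
        rw [R_vanish c α (m+1) this t]
        simpa using hM0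
      · have hmj' : (m+1) + j' = α := by omega
        have h := IH c hc hcd (m+1) j' hmj' t
        rw [abs_mul, abs_of_pos hc]
        calc c * |R c α (m+1) t| ≤ c * (B * (1 + x) ^ α * s ^ j') := by gcongr
          _ = B * (1+x)^α * s^(j'+2) := by rw [hc2]; ring
          _ ≤ M := by
            rw [hM_def]
            calc B * (1+x)^α * s^(j'+2)
                ≤ B * ((1 + 2*Real.sqrt d)^(α+1) * (1+x)^(α+1)) * s^(j'+2) := by
                  gcongr
                  calc (1+x)^α ≤ 1 * (1+x)^(α+1) := by
                        rw [one_mul]; gcongr; omega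
                    _ ≤ (1 + 2*Real.sqrt d)^(α+1) * (1+x)^(α+1) := by
                        gcongr; exact one_le_pow₀ hD1
              _ = B * (1 + 2*Real.sqrt d)^(α+1) * (1+x)^(α+1) * s^(j'+2) := by ring
    -- Term 2 : |(c - t) * R c α m (t-1)| ≤ M
    have T2 : |(c - t) * R c α m (t-1)| ≤ M := by
      rcases j with _ | j'
      · have : α < m := by omega
        rw [R_vanish c α m this (t-1)]
        simpa using hM0
      · have hmj' : m + j' = α := by omega
        have h := IH c hc hcd m j' hmj' (t-1)
        have hk : (1 + |t - 1 - c| / s) ≤ D := key (t-1) (by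
          calc |t - 1 - c| ≤ |t - c| + |(-1 : ℝ)| := by
                have : t - 1 - c = (t - c) + (-1) := by ring
                rw [this]; exact abs_add_le _ _
            _ ≤ |t - c| + 2 := by norm_num)
        have habs : |c - t| = x * s := by
          rw [hx_def, div_mul_cancel₀ _ (ne_of_gt hs), abs_sub_comm]
        rw [abs_mul, habs]
        calc x * s * |R c α m (t-1)|
            ≤ x * s * (B * (1 + |t - 1 - c| / s) ^ α * s ^ j') := by gcongr
          _ ≤ (1 + x) * s * (B * D ^ α * s ^ j') := by
              gcongr <;> first | positivity | linarith
          _ = B * ((1 + 2*Real.sqrt d)^α * ((1+x)^α * (1+x))) * s^(j'+1) := by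
              rw [hD_def, mul_pow]; ring
          _ ≤ B * ((1 + 2*Real.sqrt d)^(α+1) * ((1+x)^α * (1+x))) * s^(j'+1) := by
              gcongr
              · omega
          _ = M := by rw [hM_def]; ring
    -- Term 3 : |m * R c α (m-1) (t-2)| ≤ (α+1) * M
    have T3 : |(m:ℝ) * R c α (m-1) (t-2)| ≤ (α+1) * M := by
      rcases m with _ | m'
      · simp
        positivity
      · have hmj' : m' + j = α := by omega
        have h := IH c hc hcd m' j hmj' (t-2)
        have hk : (1 + |t - 2 - c| / s) ≤ D := key (t-2) (by
          calc |t - 2 - c| ≤ |t - c| + |(-2 : ℝ)| := by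
                have : t - 2 - c = (t - c) + (-2) := by ring
                rw [this]; exact abs_add_le _ _
            _ ≤ |t - c| + 2 := by norm_num)
        have hm1 : ((m' + 1 : ℕ) : ℝ) ≤ (α:ℝ)+1 := by
          have : m' + 1 ≤ α + 1 := by omega
          exact_mod_cast this
        have e0 : (m' + 1) - 1 = m' := by omega
        rw [abs_mul, e0, Nat.abs_cast]
        calc ((m'+1 : ℕ) : ℝ) * |R c α m' (t-2)|
            ≤ ((α:ℝ)+1) * (B * (1 + |t - 2 - c| / s) ^ α * s ^ j) := by
              gcongr
            _ ≤ ((α:ℝ)+1) * (B * D ^ α * s ^ j) := by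
              gcongr
            _ ≤ ((α:ℝ)+1) * M := by
              gcongr
              rw [hM_def]
              have := powD D (by positivity) le_rfl
              calc B * D ^ α * s ^ j
                  ≤ B * ((1 + 2*Real.sqrt d)^(α+1) * (1+x)^(α+1)) * s ^ j := by gcongr
                _ = B * (1 + 2*Real.sqrt d)^(α+1) * (1+x)^(α+1) * s ^ j := by ring
    have split := R_rec c α m t
    calc |R c (α+1) m t|
        ≤ |c * R c α (m+1) t| + |(c - t) * R c α m (t-1)| + |(m:ℝ) * R c α (m-1) (t-2)| := by
          rw [split]
          calc |c * R c α (m+1) t + (c - t) * R c α m (t-1) - (m:ℝ) * R c α (m-1) (t-2)|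
              ≤ |c * R c α (m+1) t + (c - t) * R c α m (t-1)| + |(m:ℝ) * R c α (m-1) (t-2)| :=
                abs_sub _ _
            _ ≤ _ := by
                have := abs_add_le (c * R c α (m+1) t) ((c - t) * R c α m (t-1))
                linarith
      _ ≤ M + M + ((α:ℝ)+1) * M := by linarith
      _ = B * (α+3) * (1 + 2*Real.sqrt d)^(α+1) * (1 + x) ^ (α+1) * s ^ j := by
          rw [hM_def]; push_cast; ring

lemma g_nonneg (c : ℝ) (hc : 0 ≤ c) (k : ℤ) : 0 ≤ g c k := by
  unfold g
  split
  · positivity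
  · exact le_refl 0

lemma g_step (c : ℝ) (hc : 0 < c) (k : ℤ) :
    g c k = ((k:ℝ)+1)/c * g c (k+1) := by
  unfold g
  rcases lt_trichotomy k (-1) with h | h | h
  · rw [if_neg (by omega), if_neg (by omega)]
    ring
  · subst h
    norm_num
  · have hk : 0 ≤ k := by omega
    rw [if_pos hk, if_pos (by omega)]
    obtain ⟨n, rfl⟩ : ∃ n : ℕ, k = (n : ℤ) := ⟨k.toNat, (Int.toNat_of_nonneg hk).symm⟩
    have e1 : ((n:ℤ)).toNat = n := rfl
    have e2 : ((n:ℤ)+1).toNat = n+1 := rfl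
    rw [e1, e2, Nat.factorial_succ]
    have hfac : (0:ℝ) < n.factorial := by positivity
    field_simp
    push_cast
    ring

lemma factorial_lower (k : ℕ) (hk : 1 ≤ k) :
    Real.sqrt k * ((k:ℝ) / Real.exp 1)^k ≤ (k.factorial : ℝ) := by
  have h1 : Real.sqrt Real.pi ≤ Stirling.stirlingSeq k := by
    obtain ⟨k', rfl⟩ : ∃ k', k = k' + 1 := ⟨k - 1, by omega⟩
    have ha : Antitone (Stirling.stirlingSeq ∘ Nat.succ) := Stirling.stirlingSeq'_antitone
    have ht : Filter.Tendsto (Stirling.stirlingSeq ∘ Nat.succ) atTop (nhds (Real.sqrt Real.pi)) :=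
      Stirling.tendsto_stirlingSeq_sqrt_pi.comp (Filter.tendsto_add_atTop_nat 1)
    exact ha.le_of_tendsto ht k'
  have h2 : (1:ℝ) ≤ Stirling.stirlingSeq k := by
    have : (1:ℝ) ≤ Real.sqrt Real.pi := by
      rw [show (1:ℝ) = Real.sqrt 1 by simp]
      exact Real.sqrt_le_sqrt (by linarith [Real.pi_gt_three])
    linarith
  have hk0 : (0:ℝ) < k := by exact_mod_cast hk
  have hden : (0:ℝ) < Real.sqrt (2*k) * ((k:ℝ) / Real.exp 1)^k := by positivity
  have h3 : Stirling.stirlingSeq k = (k.factorial:ℝ) / (Real.sqrt (2*k) * ((k:ℝ)/Real.exp 1)^k) := rfl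
  have h4 : Real.sqrt (2*k) * ((k:ℝ)/Real.exp 1)^k ≤ (k.factorial:ℝ) := by
    rw [h3, le_div_iff₀ hden] at h2
    linarith
  have h5 : Real.sqrt k ≤ Real.sqrt (2*k) := Real.sqrt_le_sqrt (by linarith)
  have h6 : (0:ℝ) ≤ ((k:ℝ)/Real.exp 1)^k := by positivity
  nlinarith

lemma log_ge_aux (u : ℝ) (hu : 0 < u) : 1 - 1/u ≤ Real.log u := by
  have h := Real.log_le_sub_one_of_pos (show (0:ℝ) < u⁻¹ by positivity)
  rw [Real.log_inv] at h
  have : 1/u = u⁻¹ := one_div u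
  linarith [h]

lemma log_le_sqrt (u : ℝ) (hu : 0 < u) : Real.log u ≤ 2*(Real.sqrt u - 1) := by
  have h := Real.log_le_sub_one_of_pos (Real.sqrt_pos.2 hu)
  rw [Real.log_sqrt hu.le] at h
  linarith

lemma log_ge_sqrt (u : ℝ) (hu : 0 < u) : 2*(1 - 1/Real.sqrt u) ≤ Real.log u := by
  have h := log_ge_aux (Real.sqrt u) (Real.sqrt_pos.2 hu)
  rw [Real.log_sqrt hu.le] at h
  linarith

set_option maxHeartbeats 1000000 in
lemma tail_bound (d : ℕ) (hd : 1 ≤ d) (c : ℝ) (hc : 0 < c) (hcd : 1 ≤ c * d) (m : ℤ) :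
    Real.sqrt c * Real.exp (-c) * g c m * Real.exp (|(m:ℝ) - c| / Real.sqrt c)
      ≤ Real.exp (3 + 4 * Real.sqrt d * Real.exp (1 + Real.sqrt d)) := by
  set E : ℝ := 3 + 4 * Real.sqrt d * Real.exp (1 + Real.sqrt d) with hE_def
  have hd0 : (0:ℝ) ≤ Real.sqrt d := Real.sqrt_nonneg d
  have hE3 : (3:ℝ) ≤ E := by
    have : 0 ≤ 4 * Real.sqrt d * Real.exp (1 + Real.sqrt d) := by positivity
    linarith
  have hs : 0 < Real.sqrt c := Real.sqrt_pos.2 hc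
  set s : ℝ := Real.sqrt c with hs_def
  have hsd : 1 ≤ s * Real.sqrt d := by
    rw [hs_def, ← Real.sqrt_mul hc.le]
    rw [show (1:ℝ) = Real.sqrt 1 by simp]
    exact Real.sqrt_le_sqrt (by exact_mod_cast hcd)
  have hc2 : c = s^2 := (Real.sq_sqrt hc.le).symm
  rcases lt_or_ge m 0 with hm | hm
  · rw [g, if_neg (by omega)]
    have : (0:ℝ) < Real.exp E := Real.exp_pos E
    nlinarith
  · obtain ⟨k, rfl⟩ : ∃ k : ℕ, m = (k : ℤ) := ⟨m.toNat, (Int.toNat_of_nonneg hm).symm⟩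
    have hgk : g c (k:ℤ) = c^k / (k.factorial : ℝ) := by
      rw [g, if_pos (by positivity)]
      simp
    have hmc : ((k:ℤ):ℝ) = (k:ℝ) := by push_cast; ring
    rw [hgk, hmc]
    rcases Nat.eq_zero_or_pos k with rfl | hk1
    · simp only [Nat.cast_zero, pow_zero, Nat.factorial_zero, Nat.cast_one, div_one]
      have habs : |(0:ℝ) - c| = c := by rw [abs_of_nonpos (by linarith)]; ring
      rw [habs]
      have hcs : c / s = s := by rw [hc2]; field_simp
      rw [hcs]
      have h1 : s ≤ Real.exp s := by linarith [Real.add_one_le_exp s]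
      calc s * Real.exp (-c) * 1 * Real.exp s = s * (Real.exp (-c) * Real.exp s) := by ring
        _ ≤ Real.exp s * (Real.exp (-c) * Real.exp s) :=
            mul_le_mul_of_nonneg_right h1 (by positivity)
        _ = Real.exp (s + -c + s) := by rw [← Real.exp_add, ← Real.exp_add]; ring_nf
        _ ≤ Real.exp E := by
            apply Real.exp_le_exp.2
            nlinarith [sq_nonneg (s - 1)]
    · -- k ≥ 1
      have hk0 : (0:ℝ) < k := by exact_mod_cast hk1
      have hr : 0 < Real.sqrt k := Real.sqrt_pos.2 hk0
      set r : ℝ := Real.sqrt k with hr_def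
      have hr1 : 1 ≤ r := by
        rw [hr_def, show (1:ℝ) = Real.sqrt 1 by simp]
        exact Real.sqrt_le_sqrt (by exact_mod_cast hk1)
      have hk2 : (k:ℝ) = r^2 := (Real.sq_sqrt hk0.le).symm
      set L : ℝ := Real.log (c / k) with hL_def
      set x : ℝ := |(k:ℝ) - c| / s with hx_def
      have hx0 : 0 ≤ x := by positivity
      have hxs : x * s = |(k:ℝ) - c| := by rw [hx_def]; field_simp
      -- master bound
      have master : s * Real.exp (-c) * (c^k / (k.factorial:ℝ)) * Real.exp x
          ≤ Real.exp (L/2 + k*L + ((k:ℝ) - c) + x) := by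
        have f1 := factorial_lower k hk1
        have hckpos : (0:ℝ) < c / k := by positivity
        have hexpL : Real.exp L = c / k := Real.exp_log hckpos
        have hck : c^k = Real.exp ((k:ℕ)*L) * (k:ℝ)^k := by
          rw [Real.exp_nat_mul, hexpL, div_pow]
          field_simp
        have hsr : s = Real.exp (Real.log c / 2) := by
          rw [hs_def, ← Real.log_sqrt hc.le, Real.exp_log hs]
        have hrr : r = Real.exp (Real.log k / 2) := by
          rw [hr_def, ← Real.log_sqrt hk0.le, Real.exp_log hr]
        have hLsplit : L = Real.log c - Real.log k := Real.log_div (ne_of_gt hc) (ne_of_gt hk0)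
        have hfac0 : (0:ℝ) < (k.factorial : ℝ) := by positivity
        have key1 : c^k / (k.factorial:ℝ) ≤ Real.exp ((k:ℕ)*L + k) / r := by
          rw [div_le_div_iff₀ hfac0 hr]
          have e1 : Real.exp ((k:ℕ)*L + k) = Real.exp ((k:ℕ)*L) * Real.exp k := by
            rw [← Real.exp_add]
          have e2 : ((k:ℝ)/Real.exp 1)^k = (k:ℝ)^k / Real.exp k := by
            rw [div_pow, ← Real.exp_nat_mul, mul_one]
          have f1' : r * ((k:ℝ)^k / Real.exp k) ≤ (k.factorial : ℝ) := by
            rw [← e2]; exact f1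
          have hexpk : (0:ℝ) < Real.exp k := Real.exp_pos _
          have hekL : (0:ℝ) < Real.exp ((k:ℕ)*L) := Real.exp_pos _
          calc c^k * r = Real.exp ((k:ℕ)*L) * Real.exp k * (r * ((k:ℝ)^k / Real.exp k)) := by
                rw [hck]; field_simp
            _ ≤ Real.exp ((k:ℕ)*L) * Real.exp k * (k.factorial:ℝ) := by
                gcongr
            _ = Real.exp ((k:ℕ)*L + k) * (k.factorial:ℝ) := by rw [e1]
        calc s * Real.exp (-c) * (c^k / (k.factorial:ℝ)) * Real.exp x
            ≤ s * Real.exp (-c) * (Real.exp ((k:ℕ)*L + k) / r) * Real.exp x := by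
              have : (0:ℝ) < Real.exp (-c) := Real.exp_pos _
              have : (0:ℝ) < Real.exp x := Real.exp_pos _
              gcongr
          _ = Real.exp (L/2 + k*L + ((k:ℝ) - c) + x) := by
              rw [hsr, hrr]
              rw [← Real.exp_sub, ← Real.exp_add, ← Real.exp_add, ← Real.exp_add]
              congr 1
              rw [hLsplit]
              push_cast
              ring
      refine master.trans (Real.exp_le_exp.2 ?_)
      -- exponent bound : T ≤ E
      have hsqdiv : Real.sqrt (c/(k:ℝ)) = s / r := by
        rw [hs_def, hr_def]
        exact Real.sqrt_div hc.le k
      have hL1 : L * r ≤ 2 * (s - r) := by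
        have h := log_le_sqrt (c/(k:ℝ)) (by positivity)
        rw [hsqdiv] at h
        calc L * r ≤ (2*(s/r - 1)) * r := mul_le_mul_of_nonneg_right h hr.le
          _ = 2*(s - r) := by field_simp
      rcases le_or_gt (k:ℝ) c with hkc | hkc
      · -- k ≤ c
        have habs : |(k:ℝ) - c| = c - k := by rw [abs_of_nonpos (by linarith)]; ring
        have hxs' : x * s = s^2 - r^2 := by rw [hxs, habs, hc2, hk2]
        have hL0 : 0 ≤ L := Real.log_nonneg (by rw [le_div_iff₀ hk0]; linarith)
        have hrs : r ≤ s := by rw [hr_def, hs_def]; exact Real.sqrt_le_sqrt hkc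
        have hxle : x ≤ 2*(s - r) := by
          have h2 : x*s ≤ (2*(s-r))*s := by nlinarith [sq_nonneg (s-r), hrs, hr]
          exact (mul_le_mul_iff_of_pos_right hs).1 h2
        have hL2 : L ≤ 2*(s - r) := le_trans (le_mul_of_one_le_right hL0 hr1) hL1
        have hkL : (k:ℝ) * L ≤ 2*r*(s - r) := by
          calc (k:ℝ) * L = r * (L * r) := by rw [hk2]; ring
            _ ≤ r * (2*(s-r)) := mul_le_mul_of_nonneg_left hL1 hr.le
            _ = 2*r*(s-r) := by ring
        have hT : L/2 + (k:ℝ)*L + ((k:ℝ) - c) + x ≤ 3 := by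
          nlinarith [sq_nonneg (s - r - 3/2), hL2, hkL, hxle, hrs, hk2, hc2]
        linarith
      · -- c < k
        have habs : |(k:ℝ) - c| = (k:ℝ) - c := by rw [abs_of_nonneg (by linarith)]
        have hxs' : x * s = r^2 - s^2 := by rw [hxs, habs, hc2, hk2]
        have hL0 : L ≤ 0 := Real.log_nonpos (by positivity) (by rw [div_le_one hk0]; linarith)
        have hsr' : s ≤ r := by rw [hr_def, hs_def]; exact Real.sqrt_le_sqrt hkc.le
        have hkL : (k:ℝ)*L ≤ 2*r*(s-r) := by
          calc (k:ℝ) * L = r * (L * r) := by rw [hk2]; ring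
            _ ≤ r * (2*(s-r)) := mul_le_mul_of_nonneg_left hL1 hr.le
            _ = 2*r*(s-r) := by ring
        rcases le_or_gt 4 c with hc4 | hc4
        · -- c ≥ 4, so s ≥ 2
          have hs2 : 2 ≤ s := by
            rw [hs_def, show (2:ℝ) = Real.sqrt 4 by
              rw [show (4:ℝ) = 2^2 by norm_num, Real.sqrt_sq (by norm_num : (0:ℝ) ≤ 2)]]
            exact Real.sqrt_le_sqrt hc4
          have hxle : x ≤ (r-s)^2/2 + 2*(r-s) := by
            have h2 : x*s ≤ ((r-s)^2/2 + 2*(r-s))*s := by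
              nlinarith [hs2, hsr', sq_nonneg (r-s)]
            exact (mul_le_mul_iff_of_pos_right hs).1 h2
          nlinarith [hkL, hL0, hxle, sq_nonneg (r - s - 2), hk2, hc2, hE3, hsr']
        · -- c < 4
          have hx_kd : x ≤ (k:ℝ) * Real.sqrt d := by
            have e : x*s*Real.sqrt d = ((k:ℝ) - c)*Real.sqrt d := by rw [hxs, habs]
            nlinarith [e, hx0, hsd, hd0, hc]
          rcases le_or_gt (c * Real.exp (1 + Real.sqrt d)) (k:ℝ) with hbig | hsmall
          · have hlogkc : Real.log ((k:ℝ)/c) = Real.log k - Real.log c :=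
              Real.log_div (ne_of_gt hk0) (ne_of_gt hc)
            have hLsplit2 : L = Real.log c - Real.log k :=
              Real.log_div (ne_of_gt hc) (ne_of_gt hk0)
            have h1 : Real.exp (1 + Real.sqrt d) ≤ (k:ℝ)/c := by
              rw [le_div_iff₀ hc]; linarith
            have h2 : 1 + Real.sqrt d ≤ Real.log ((k:ℝ)/c) := by
              calc 1 + Real.sqrt d = Real.log (Real.exp (1 + Real.sqrt d)) :=
                    (Real.log_exp _).symm
                _ ≤ Real.log ((k:ℝ)/c) := Real.log_le_log (Real.exp_pos _) h1
            have hLbig : L ≤ -(1 + Real.sqrt d) := by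
              rw [hLsplit2]; rw [hlogkc] at h2; linarith
            have hkLb : (k:ℝ)*L ≤ -(k:ℝ) - (k:ℝ)*Real.sqrt d := by
              nlinarith [hLbig, hk0]
            linarith [hkLb, hx_kd, hL0, hc.le, hE3, hc]
          · have hksm : (k:ℝ) ≤ 4 * Real.exp (1+Real.sqrt d) := by
              nlinarith [Real.exp_pos (1+Real.sqrt d), hsmall, hc4, hc]
            have hkL2 : (k:ℝ)*L ≤ c - k := by
              have h := Real.log_le_sub_one_of_pos (show (0:ℝ) < c/(k:ℝ) by positivity)
              have h' : L ≤ c/(k:ℝ) - 1 := h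
              nlinarith [h', hk0]
            have hfin : (k:ℝ)*Real.sqrt d ≤ 4*Real.exp (1+Real.sqrt d)*Real.sqrt d :=
              mul_le_mul_of_nonneg_right hksm hd0
            show L/2 + (k:ℝ)*L + ((k:ℝ) - c) + x ≤ 3 + 4 * Real.sqrt d * Real.exp (1 + Real.sqrt d)
            linarith [hL0, hkL2, hx_kd, hfin]

lemma iterate_formula (d n : ℕ) (hd : 1 ≤ d) (hn : 1 ≤ n) (α : ℕ) (y : ℝ) :
    (Dn d n)^[α] (fn d n) y =
      Real.sqrt ((n:ℝ)/d) * Real.exp (-((n:ℝ)/d)) * (Real.sqrt ((n:ℝ)/d)) ^ α / ((n:ℝ)/d) ^ α *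
        (g ((n:ℝ)/d) (⌊y * Real.sqrt ((n:ℝ)/d) + (n:ℝ)/d⌋ + α) *
          Q ((n:ℝ)/d) α ((⌊y * Real.sqrt ((n:ℝ)/d) + (n:ℝ)/d⌋ : ℝ) + α)) := by
  have hn0 : (0:ℝ) < n := by exact_mod_cast hn
  have hd0 : (0:ℝ) < d := by exact_mod_cast hd
  have hc : 0 < (n:ℝ)/d := div_pos hn0 hd0
  set c : ℝ := (n:ℝ)/d with hcdef
  have hs : 0 < Real.sqrt c := Real.sqrt_pos.2 hc
  have hdn : Real.sqrt ((d:ℝ)/n) = (Real.sqrt c)⁻¹ := by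
    rw [← Real.sqrt_inv]
    congr 1
    rw [hcdef]
    field_simp
  induction α generalizing y with
  | zero =>
    simp only [Function.iterate_zero, id_eq, pow_zero, Nat.cast_zero, add_zero, div_one, mul_one]
    simp only [fn, g, Q]
    split
    · ring
    · simp
  | succ α ih =>
    rw [Function.iterate_succ_apply']
    show ((Dn d n)^[α] (fn d n) (y + Real.sqrt ((d:ℝ)/n)) - (Dn d n)^[α] (fn d n) y) /
        Real.sqrt ((d:ℝ)/n) = _
    rw [hdn, ih y, ih (y + (Real.sqrt c)⁻¹)]
    have hK : ⌊(y + (Real.sqrt c)⁻¹) * Real.sqrt c + c⌋ = ⌊y * Real.sqrt c + c⌋ + 1 := by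
      have e : (y + (Real.sqrt c)⁻¹) * Real.sqrt c + c = (y * Real.sqrt c + c) + 1 := by
        field_simp
        ring
      rw [e, Int.floor_add_one]
    rw [hK]
    set K : ℤ := ⌊y * Real.sqrt c + c⌋ with hKdef
    have e1 : K + 1 + (α:ℤ) = (K + α) + 1 := by ring
    have e2 : K + ((α:ℕ)+1 : ℤ) = (K + α) + 1 := by push_cast; ring
    have e2' : K + ((α+1 : ℕ) : ℤ) = (K + α) + 1 := by push_cast; ring
    rw [e1, e2']
    have hgs := g_step c hc (K + α)
    have hQ : Q c (α+1) (((K:ℝ) + α) + 1) =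
        c * Q c α (((K:ℝ)+α)+1) - (((K:ℝ)+α)+1) * Q c α ((K:ℝ)+α) := by
      show c * Q c α _ - _ * Q c α ((((K:ℝ)+α)+1) - 1) = _
      norm_num
    have ecast1 : ((K + 1 : ℤ) : ℝ) + (α:ℝ) = ((K:ℝ) + α) + 1 := by push_cast; ring
    have ecast2 : ((K:ℝ)) + ((α:ℕ)+1 : ℝ) = ((K:ℝ) + α) + 1 := by push_cast; ring
    have ecast3 : ((K:ℝ)) + ((α+1:ℕ) : ℝ) = ((K:ℝ) + α) + 1 := by push_cast; ring
    rw [ecast1, ecast3, hQ, hgs]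
    have hcast4 : (((K + α : ℤ)) : ℝ) = (K:ℝ) + α := by push_cast; ring
    rw [hcast4]
    have hs' : Real.sqrt c ≠ 0 := ne_of_gt hs
    have hc' : c ≠ 0 := ne_of_gt hc
    field_simp
    ring
end IDF

set_option maxHeartbeats 1600000 in
/-- For every integer `α ≥ 0` there is a polynomial `P_α`, positive on `ℝ`, such that
`|Δ_n^α f_n (y)| < P_α(y) e^{-|y|}` for all `n ≥ 1` and all `y ∈ ℝ`. -/
theorem iterated_difference_of_fn_dominated
    (d : ℕ) (hd : 1 ≤ d) (α : ℕ) :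
    ∃ P : Polynomial ℝ, (∀ y : ℝ, 0 < P.eval y) ∧
      ∀ n : ℕ, 1 ≤ n → ∀ y : ℝ,
        |(Dn d n)^[α] (fn d n) y| < P.eval y * Real.exp (-|y|) := by
  obtain ⟨B, hB, hRb⟩ := IDF.R_bound d hd α
  have hd0 : (0:ℝ) ≤ Real.sqrt d := Real.sqrt_nonneg d
  set A : ℝ := Real.exp (3 + 4 * Real.sqrt d * Real.exp (1 + Real.sqrt d)) with hA_def
  have hA : 0 < A := Real.exp_pos _
  set M : ℝ := A * B * Real.exp ((α+1) * Real.sqrt d) with hM_def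
  have hM : 0 < M := by positivity
  set ca : ℝ := 2 + (α+1) * Real.sqrt d with hca_def
  have hca : 0 < ca := by rw [hca_def]; positivity
  refine ⟨Polynomial.C M * (Polynomial.C ca + Polynomial.X^2)^α + Polynomial.C 1, ?_, ?_⟩
  · intro y
    have hev : (Polynomial.C M * (Polynomial.C ca + Polynomial.X^2)^α
        + Polynomial.C 1).eval y = M * (ca + y^2)^α + 1 := by simp
    rw [hev]
    have h1 : 0 < ca + y^2 := by nlinarith [sq_nonneg y]
    have h2 : 0 < (ca + y^2)^α := pow_pos h1 α
    nlinarith [mul_pos hM h2]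
  · intro n hn y
    have hev : (Polynomial.C M * (Polynomial.C ca + Polynomial.X^2)^α
        + Polynomial.C 1).eval y = M * (ca + y^2)^α + 1 := by simp
    rw [hev]
    have hn0 : (0:ℝ) < n := by exact_mod_cast hn
    have hdd : (0:ℝ) < d := by exact_mod_cast hd
    have hc : 0 < (n:ℝ)/d := div_pos hn0 hdd
    have hcd : 1 ≤ ((n:ℝ)/d) * d := by
      have e : ((n:ℝ)/d) * d = n := by field_simp
      rw [e]; exact_mod_cast hn
    rw [IDF.iterate_formula d n hd hn α y]
    set c : ℝ := (n:ℝ)/d with hc_def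
    have hs : 0 < Real.sqrt c := Real.sqrt_pos.2 hc
    set s : ℝ := Real.sqrt c with hs_def
    have hsd : 1 ≤ s * Real.sqrt d := by
      rw [hs_def, ← Real.sqrt_mul hc.le]
      rw [show (1:ℝ) = Real.sqrt 1 by simp]
      exact Real.sqrt_le_sqrt hcd
    set K : ℤ := ⌊y * s + c⌋ with hK_def
    set x : ℝ := |(K:ℝ) + α - c| / s with hx_def
    have hx0 : 0 ≤ x := by positivity
    -- bound on Q
    have hQb : |IDF.Q c α ((K:ℝ) + α)| ≤ B * (1 + x)^α * s^α := by
      have h := hRb c hc hcd 0 α (by omega) ((K:ℝ) + α)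
      rw [IDF.R_zero] at h
      exact h
    -- tail bound
    have htail : s * Real.exp (-c) * IDF.g c (K + α) * Real.exp x ≤ A := by
      have h := IDF.tail_bound d hd c hc hcd (K + α)
      have e : ((K + (α:ℤ) : ℤ) : ℝ) = (K:ℝ) + α := by push_cast; ring
      rw [e] at h
      exact h
    have hg0 : 0 ≤ IDF.g c (K + α) := IDF.g_nonneg c hc.le _
    have htail' : s * Real.exp (-c) * IDF.g c (K + α) ≤ A * Real.exp (-x) := by
      have hex : 0 < Real.exp x := Real.exp_pos x
      have h2 : A * Real.exp (-x) * Real.exp x = A := by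
        rw [mul_assoc, ← Real.exp_add]; simp
      nlinarith [htail, hex, h2]
    -- floor estimates
    have hfl1 : (K:ℝ) ≤ y*s + c := Int.floor_le _
    have hfl2 : y*s + c < (K:ℝ) + 1 := Int.lt_floor_add_one _
    have habs1 : |(K:ℝ) + α - c - y*s| ≤ (α:ℝ) + 1 := by
      rw [abs_le]; constructor <;> [linarith; linarith]
    have hxs : x * s = |(K:ℝ) + α - c| := by rw [hx_def]; field_simp
    have hys : |y*s| = |y| * s := by rw [abs_mul, abs_of_pos hs]
    have hone : (1:ℝ) ≤ s * Real.sqrt d := hsd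
    have hx_up : x ≤ |y| + ((α:ℝ)+1) * Real.sqrt d := by
      have h1 : |(K:ℝ) + α - c| ≤ |y*s| + ((α:ℝ)+1) := by
        have : (K:ℝ) + α - c = ((K:ℝ) + α - c - y*s) + y*s := by ring
        rw [this]
        calc |((K:ℝ) + α - c - y*s) + y*s| ≤ |(K:ℝ) + α - c - y*s| + |y*s| := abs_add_le _ _
          _ ≤ ((α:ℝ)+1) + |y*s| := by linarith
          _ = |y*s| + ((α:ℝ)+1) := by ring
      have h2 : x * s ≤ (|y| + ((α:ℝ)+1) * Real.sqrt d) * s := by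
        rw [hxs]
        calc |(K:ℝ) + α - c| ≤ |y| * s + ((α:ℝ)+1) := by rw [← hys]; exact h1
          _ ≤ |y| * s + ((α:ℝ)+1) * (Real.sqrt d * s) := by
              nlinarith [hone, abs_nonneg y]
          _ = (|y| + ((α:ℝ)+1) * Real.sqrt d) * s := by ring
      exact (mul_le_mul_iff_of_pos_right hs).1 h2
    have hx_lo : |y| ≤ x + ((α:ℝ)+1) * Real.sqrt d := by
      have h1 : |y*s| ≤ |(K:ℝ) + α - c| + ((α:ℝ)+1) := by
        have : y*s = ((K:ℝ) + α - c) - ((K:ℝ) + α - c - y*s) := by ring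
        rw [this]
        calc |((K:ℝ) + α - c) - ((K:ℝ) + α - c - y*s)|
            ≤ |(K:ℝ) + α - c| + |(K:ℝ) + α - c - y*s| :=
              abs_sub ((K:ℝ) + α - c) ((K:ℝ) + α - c - y*s)
          _ ≤ |(K:ℝ) + α - c| + ((α:ℝ)+1) := by linarith
      have h2 : |y| * s ≤ (x + ((α:ℝ)+1) * Real.sqrt d) * s := by
        rw [← hys]
        calc |y*s| ≤ |(K:ℝ) + α - c| + ((α:ℝ)+1) := h1
          _ = x*s + ((α:ℝ)+1) := by rw [hxs]
          _ ≤ x*s + ((α:ℝ)+1) * (Real.sqrt d * s) := by nlinarith [hone]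
          _ = (x + ((α:ℝ)+1) * Real.sqrt d) * s := by ring
      exact (mul_le_mul_iff_of_pos_right hs).1 h2
    have hexp1 : Real.exp (-x) ≤ Real.exp (((α:ℝ)+1) * Real.sqrt d) * Real.exp (-|y|) := by
      rw [← Real.exp_add]
      exact Real.exp_le_exp.2 (by linarith)
    have hpow1 : (1 + x)^α ≤ (ca + y^2)^α := by
      apply pow_le_pow_left₀ (by linarith)
      have hy1 : |y| ≤ 1 + y^2 := by nlinarith [sq_nonneg (|y| - 1), sq_abs y]
      rw [hca_def]
      linarith [hx_up]
    have hss : s^α * s^α = c^α := by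
      rw [← pow_add, ← two_mul, pow_mul]
      congr 1
      rw [hs_def]
      exact Real.sq_sqrt hc.le
    have hcp : (0:ℝ) < c^α := pow_pos hc α
    have main : |s * Real.exp (-c) * s ^ α / c ^ α *
        (IDF.g c (K + α) * IDF.Q c α ((K:ℝ) + α))| ≤ M * (ca + y^2)^α * Real.exp (-|y|) := by
      have e1 : |s * Real.exp (-c) * s ^ α / c ^ α *
          (IDF.g c (K + α) * IDF.Q c α ((K:ℝ) + α))|
          = s * Real.exp (-c) * s ^ α / c ^ α *
            (IDF.g c (K + α) * |IDF.Q c α ((K:ℝ) + α)|) := by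
        rw [abs_mul, abs_mul, abs_of_nonneg hg0, abs_of_nonneg (by positivity :
          (0:ℝ) ≤ s * Real.exp (-c) * s ^ α / c ^ α)]
      rw [e1]
      calc s * Real.exp (-c) * s ^ α / c ^ α *
            (IDF.g c (K + α) * |IDF.Q c α ((K:ℝ) + α)|)
          ≤ s * Real.exp (-c) * s ^ α / c ^ α *
            (IDF.g c (K + α) * (B * (1 + x)^α * s^α)) := by gcongr
        _ = B * (s * Real.exp (-c) * IDF.g c (K + α)) * (1 + x)^α * (s^α * s^α / c^α) := by
            ring
        _ = B * (s * Real.exp (-c) * IDF.g c (K + α)) * (1 + x)^α := by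
            rw [hss, div_self (ne_of_gt hcp), mul_one]
        _ ≤ B * (A * Real.exp (-x)) * (1 + x)^α := by
            gcongr
        _ ≤ B * (A * (Real.exp (((α:ℝ)+1) * Real.sqrt d) * Real.exp (-|y|))) * (ca + y^2)^α := by
            have h1x : (0:ℝ) ≤ 1 + x := by linarith
            have := mul_le_mul (mul_le_mul_of_nonneg_left hexp1 hA.le)
              hpow1 (by positivity) (by positivity)
            calc B * (A * Real.exp (-x)) * (1 + x)^α
                = B * ((A * Real.exp (-x)) * (1 + x)^α) := by ring
              _ ≤ B * ((A * (Real.exp (((α:ℝ)+1) * Real.sqrt d) * Real.exp (-|y|)))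
                    * (ca + y^2)^α) := by
                  exact mul_le_mul_of_nonneg_left this hB.le
              _ = _ := by ring
        _ = M * (ca + y^2)^α * Real.exp (-|y|) := by
            rw [hM_def]
            push_cast
            ring
    have hexppos : 0 < Real.exp (-|y|) := Real.exp_pos _
    calc |s * Real.exp (-c) * s ^ α / c ^ α *
          (IDF.g c (K + α) * IDF.Q c α ((K:ℝ) + α))|
        ≤ M * (ca + y^2)^α * Real.exp (-|y|) := main
      _ < (M * (ca + y^2)^α + 1) * Real.exp (-|y|) := by nlinarith [hexppos]
end

section
/- Let (ν_m)_{m ≥ 1} be a sequence of positive reals with ν_m → ∞, let y ∈ ℝ, and let (k_m)_{m ≥ 1} be a sequence of non-negative integers such that (k_m − ν_m)/√(ν_m) → y as m → ∞. Then √(ν_m) · ν_m^{k_m} e^{−ν_m} / k_m! → (1/√(2π)) · e^{−y²/2} as m → ∞. In other words, the suitably rescaled point probabilities of the Poisson distribution with parameter ν converge, as ν → ∞, to the density of the standard normal distribution. -/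
open Filter

/-- Cubic error bound for the logarithm: `|log(1+t) - t + t²/2| ≤ 2|t|³` for `|t| ≤ 1/2`. -/
lemma log_quadratic_err (t : ℝ) (ht : |t| ≤ 1/2) :
    |Real.log (1 + t) - t + t ^ 2 / 2| ≤ 2 * |t| ^ 3 := by
  have h1 : |(-t)| < 1 := by rw [abs_neg]; linarith
  have hb := Real.abs_log_sub_add_sum_range_le h1 2
  have hsum : (∑ i ∈ Finset.range 2, (-t) ^ (i + 1) / ((i:ℝ) + 1)) = -t + t ^ 2 / 2 := by
    simp [Finset.sum_range_succ]
    ring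
  rw [hsum, abs_neg] at hb
  have h3 : |t| ^ (2 + 1) / (1 - |t|) ≤ 2 * |t| ^ 3 := by
    rw [show (2+1) = 3 from rfl, div_le_iff₀ (by linarith)]
    have h4 : (0:ℝ) ≤ |t| ^ 3 := by positivity
    nlinarith [mul_le_mul_of_nonneg_left ht (by positivity : (0:ℝ) ≤ 2 * |t| ^ 3)]
  calc |Real.log (1 + t) - t + t ^ 2 / 2|
      = |(-t + t ^ 2 / 2) + Real.log (1 - -t)| := by rw [sub_neg_eq_add]; ring_nf
    _ ≤ |t| ^ (2 + 1) / (1 - |t|) := hb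
    _ ≤ 2 * |t| ^ 3 := h3

/-- Local central limit theorem for the Poisson distribution: if `ν_m → ∞` and `k_m` are
non-negative integers with `(k_m - ν_m)/√ν_m → y`, then the rescaled point probabilities
`√ν_m · ν_m^{k_m} e^{-ν_m} / k_m!` converge to the standard Gaussian density at `y`. -/
theorem poisson_local_clt
    (ν : ℕ → ℝ) (hν : ∀ m, 0 < ν m) (hν' : Tendsto ν atTop atTop)
    (y : ℝ) (k : ℕ → ℕ)
    (hk : Tendsto (fun m => ((k m : ℝ) - ν m) / Real.sqrt (ν m)) atTop (nhds y)) :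
    Tendsto
      (fun m => Real.sqrt (ν m) * (ν m) ^ (k m) * Real.exp (-(ν m)) / ((k m).factorial : ℝ))
      atTop (nhds ((Real.sqrt (2 * Real.pi))⁻¹ * Real.exp (-y ^ 2 / 2))) := by
  set x : ℕ → ℝ := fun m => ((k m : ℝ) - ν m) / Real.sqrt (ν m) with hxdef
  set t : ℕ → ℝ := fun m => x m / Real.sqrt (ν m) with htdef
  have hs : ∀ m, 0 < Real.sqrt (ν m) := fun m => Real.sqrt_pos.mpr (hν m)
  have hs2 : ∀ m, Real.sqrt (ν m) * Real.sqrt (ν m) = ν m :=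
    fun m => Real.mul_self_sqrt (hν m).le
  -- √ν → ∞
  have hsν : Tendsto (fun m => Real.sqrt (ν m)) atTop atTop := by
    have h0 : Tendsto (fun z : ℝ => z ^ (1/2 : ℝ)) atTop atTop :=
      tendsto_rpow_atTop (by norm_num)
    refine (h0.comp hν').congr fun m => ?_
    simp [Function.comp, Real.sqrt_eq_rpow]
  have hinv : Tendsto (fun m => (Real.sqrt (ν m))⁻¹) atTop (nhds 0) :=
    hsν.inv_tendsto_atTop
  have hxy : Tendsto x atTop (nhds y) := hk
  have htt : Tendsto t atTop (nhds 0) := by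
    have := hxy.mul hinv
    simpa [htdef, div_eq_mul_inv] using this
  -- k = ν (1 + t) as reals
  have hkν : ∀ m, (k m : ℝ) = ν m * (1 + t m) := by
    intro m
    have h := hs2 m
    have hsne := (hs m).ne'
    field_simp [htdef, hxdef]
    rw [show t m = ((k m:ℝ) - ν m) / Real.sqrt (ν m) / Real.sqrt (ν m) from rfl, div_div, h,
      mul_add, mul_div_cancel₀ _ (hν m).ne']
    ring
  -- k → ∞
  have hktop : Tendsto k atTop atTop := by
    rw [← tendsto_natCast_atTop_iff (R := ℝ)]
    have h1 : Tendsto (fun m => ν m * (1 + t m)) atTop atTop :=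
      hν'.atTop_mul_pos (by norm_num : (0:ℝ) < 1)
        (by simpa using (tendsto_const_nhds.add htt))
    exact h1.congr fun m => (hkν m).symm
  have hk1 : ∀ᶠ m in atTop, 1 ≤ k m := hktop.eventually_ge_atTop 1
  have hthalf : ∀ᶠ m in atTop, |t m| ≤ 1/2 := by
    have := (NormedAddCommGroup.tendsto_nhds_zero.mp htt) (1/2) (by norm_num)
    filter_upwards [this] with m hm
    exact le_of_lt (by simpa [Real.norm_eq_abs] using hm)
  -- the exponent
  set g : ℕ → ℝ := fun m =>
    (k m : ℝ) * Real.log (ν m) - (k m : ℝ) * Real.log (k m) + (k m : ℝ) - ν m with hgdef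
  -- limit of the exponent
  have hD : Tendsto (fun m => g m + x m ^ 2 / 2) atTop (nhds 0) := by
    apply squeeze_zero_norm' (a := fun m => (7/2) * |x m| ^ 3 * (Real.sqrt (ν m))⁻¹)
    · filter_upwards [hk1, hthalf] with m h1 h2
      have hkpos : (0:ℝ) < (k m : ℝ) := by exact_mod_cast h1
      have hs' := hs m
      have hsm := hs2 m
      have h1t : 0 < 1 + t m := by nlinarith [hν m, hkν m]
      have hlog : Real.log ((k m : ℝ)) = Real.log (ν m) + Real.log (1 + t m) := by
        rw [hkν m, Real.log_mul (hν m).ne' h1t.ne']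
      set r := Real.log (1 + t m) - t m + t m ^ 2 / 2 with hrdef
      have hr : |r| ≤ 2 * |t m| ^ 3 := log_quadratic_err (t m) h2
      have hlog' : Real.log (1 + t m) = r + t m - t m ^ 2 / 2 := by rw [hrdef]; ring
      have hxt : x m = t m * Real.sqrt (ν m) := by
        rw [htdef]; field_simp
      have hid : g m + x m ^ 2 / 2 = ν m * t m ^ 3 / 2 - ν m * (1 + t m) * r := by
        simp only [hgdef]
        rw [hlog, hlog', hxt, hkν m]
        linear_combination (t m ^ 2 / 2) * hsm
      rw [Real.norm_eq_abs, hid]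
      have h1t' : 1 + t m ≤ 3/2 := by
        have := abs_le.mp h2; linarith [this.2]
      have e1 : |ν m * t m ^ 3 / 2| ≤ ν m * |t m| ^ 3 / 2 := by
        rw [abs_div, abs_mul, abs_pow, abs_of_pos (hν m)]
        simp
      have e2 : |ν m * (1 + t m) * r| ≤ (3/2) * ν m * (2 * |t m| ^ 3) := by
        rw [abs_mul, abs_mul, abs_of_pos (hν m), abs_of_pos h1t]
        have hx3 : (0:ℝ) ≤ |t m| ^ 3 := by positivity
        nlinarith [mul_le_mul_of_nonneg_left hr (mul_nonneg (hν m).le h1t.le),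
          hν m, hx3, mul_nonneg (hν m).le hx3]
      have hconv : (7/2) * |x m| ^ 3 * (Real.sqrt (ν m))⁻¹ = (7/2) * (ν m * |t m| ^ 3) := by
        rw [hxt, abs_mul, abs_of_pos hs', mul_pow]
        rw [show |t m| ^ 3 * Real.sqrt (ν m) ^ 3 = (|t m| ^ 3 * Real.sqrt (ν m) ^ 2) * Real.sqrt (ν m) by ring]
        rw [mul_assoc, mul_inv_cancel_right₀ hs'.ne', sq, hsm]
        ring
      rw [hconv]
      calc |ν m * t m ^ 3 / 2 - ν m * (1 + t m) * r|
          ≤ |ν m * t m ^ 3 / 2| + |ν m * (1 + t m) * r| := abs_sub _ _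
        _ ≤ ν m * |t m| ^ 3 / 2 + (3/2) * ν m * (2 * |t m| ^ 3) := add_le_add e1 e2
        _ = (7/2) * (ν m * |t m| ^ 3) := by ring
    · have h0 : Tendsto (fun m => (7/2) * |x m| ^ 3 * (Real.sqrt (ν m))⁻¹) atTop
          (nhds ((7/2) * |y| ^ 3 * 0)) :=
        (tendsto_const_nhds.mul ((hxy.abs).pow 3)).mul hinv
      simpa using h0
  have hg : Tendsto g atTop (nhds (-y ^ 2 / 2)) := by
    have h1 : Tendsto (fun m => -(x m ^ 2 / 2)) atTop (nhds (-(y ^ 2 / 2))) :=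
      ((hxy.pow 2).div_const 2).neg
    have h2 := h1.add hD
    have h3 : (fun m => -(x m ^ 2 / 2) + (g m + x m ^ 2 / 2)) = g := by
      funext m; ring
    rw [h3] at h2
    simpa [neg_div] using h2
  -- assemble the three factors
  have hSt : Tendsto (fun m => (Stirling.stirlingSeq (k m))⁻¹) atTop
      (nhds (Real.sqrt Real.pi)⁻¹) :=
    (Stirling.tendsto_stirlingSeq_sqrt_pi.comp hktop).inv₀
      (Real.sqrt_pos.mpr Real.pi_pos).ne'
  have hF2 : Tendsto (fun m => Real.sqrt (ν m) / Real.sqrt (2 * (k m : ℝ))) atTop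
      (nhds (Real.sqrt 2)⁻¹) := by
    have hq : Tendsto (fun m => ν m / (2 * (k m : ℝ))) atTop (nhds 2⁻¹) := by
      have h2t : Tendsto (fun m => (2 * (1 + t m))⁻¹) atTop (nhds 2⁻¹) := by
        have ha : Tendsto (fun m => 1 + t m) atTop (nhds (1 + 0)) :=
          tendsto_const_nhds.add htt
        have h : Tendsto (fun m => 2 * (1 + t m)) atTop (nhds (2 * (1 + 0))) :=
          ha.const_mul 2
        have := h.inv₀ (by norm_num : (2:ℝ) * (1 + 0) ≠ 0)
        simpa using this
      refine h2t.congr' ?_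
      filter_upwards [hk1] with m h1
      have hkpos : (0:ℝ) < (k m : ℝ) := by exact_mod_cast h1
      have h1t : 0 < 1 + t m := by nlinarith [hν m, hkν m]
      rw [hkν m]
      field_simp [(hν m).ne', h1t.ne']
    have hc := (Real.continuous_sqrt.tendsto _).comp hq
    rw [Real.sqrt_inv] at hc
    refine hc.congr fun m => ?_
    exact Real.sqrt_div (hν m).le _
  have hexp_lim : Tendsto (fun m => Real.exp (g m)) atTop
      (nhds (Real.exp (-y ^ 2 / 2))) :=
    (Real.continuous_exp.tendsto _).comp hg
  have hlim : Tendsto (fun m => (Stirling.stirlingSeq (k m))⁻¹ *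
        (Real.sqrt (ν m) / Real.sqrt (2 * (k m : ℝ))) * Real.exp (g m)) atTop
      (nhds ((Real.sqrt Real.pi)⁻¹ * (Real.sqrt 2)⁻¹ * Real.exp (-y ^ 2 / 2))) :=
    (hSt.mul hF2).mul hexp_lim
  -- eventual equality with the product form
  have key : ∀ᶠ m in atTop,
      Real.sqrt (ν m) * (ν m) ^ (k m) * Real.exp (-(ν m)) / ((k m).factorial : ℝ)
      = (Stirling.stirlingSeq (k m))⁻¹ *
        (Real.sqrt (ν m) / Real.sqrt (2 * (k m : ℝ))) * Real.exp (g m) := by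
    filter_upwards [hk1] with m h1
    have hkpos : (0:ℝ) < (k m : ℝ) := by exact_mod_cast h1
    obtain ⟨n, hn⟩ : ∃ n, k m = n + 1 := ⟨k m - 1, by omega⟩
    have hS : 0 < Stirling.stirlingSeq (k m) := by
      rw [hn]; exact Stirling.stirlingSeq'_pos n
    have hsq : 0 < Real.sqrt (2 * (k m : ℝ)) := Real.sqrt_pos.mpr (by positivity)
    have hkk : (0:ℝ) < (k m : ℝ) ^ (k m) := by positivity
    have hfact : ((k m).factorial : ℝ)
        = Stirling.stirlingSeq (k m) *
          (Real.sqrt (2 * (k m : ℝ)) * ((k m : ℝ) / Real.exp 1) ^ (k m)) := by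
      rw [Stirling.stirlingSeq]
      rw [div_mul_cancel₀]
      positivity
    have he1 : Real.exp ((k m : ℝ) * Real.log (ν m)) = ν m ^ (k m) := by
      rw [Real.exp_nat_mul, Real.exp_log (hν m)]
    have he2 : Real.exp ((k m : ℝ) * Real.log (k m)) = (k m : ℝ) ^ (k m) := by
      rw [Real.exp_nat_mul, Real.exp_log hkpos]
    have he3 : Real.exp ((k m : ℝ) * 1) = Real.exp 1 ^ (k m) := Real.exp_nat_mul 1 (k m)
    have hexp : Real.exp (g m)
        = ν m ^ (k m) / (k m : ℝ) ^ (k m) * (Real.exp 1 ^ (k m) * Real.exp (-(ν m))) := by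
      have hgm : g m = (k m : ℝ) * Real.log (ν m) +
          (-((k m : ℝ) * Real.log (k m)) + ((k m : ℝ) * 1 + -(ν m))) := by
        rw [hgdef]; ring
      rw [hgm, Real.exp_add, Real.exp_add, Real.exp_add,
        Real.exp_neg ((k m : ℝ) * Real.log (k m)), he1, he2, he3]
      ring
    rw [hfact, hexp, div_pow]
    have hek : (0:ℝ) < Real.exp 1 ^ (k m) := by positivity
    field_simp
  have hfinal := hlim.congr' (EventuallyEq.symm key)
  have hval : (Real.sqrt Real.pi)⁻¹ * (Real.sqrt 2)⁻¹ = (Real.sqrt (2 * Real.pi))⁻¹ := by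
    rw [Real.sqrt_mul (by norm_num : (0:ℝ) ≤ 2), mul_inv, mul_comm]
  rw [← hval]
  exact hfinal
end

section
/- Let d ≥ 1 and let λ = (λ₁, …, λ_d) be a Young diagram with at most d rows and n = λ₁ + ⋯ + λ_d boxes. Then the number f^λ of standard Young tableaux of shape λ is given by the Frobenius–MacMahon determinantal formula: f^λ = n! · det( 1/(λ_i − i + j)! )_{1 ≤ i, j ≤ d}, where by convention 1/m! = 0 whenever m is a negative integer. -/
open Finset

/-- `T : Fin d → ℕ → ℕ` is a standard Young tableau of shape `lam` (a diagram with at most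
`d` rows, row `i` having `lam i` boxes, rows and columns indexed from `0`): the entries in
the boxes of the diagram are the numbers `1, …, n` (`n` the number of boxes), each used
exactly once, strictly increasing along each row and along each column; outside the diagram
we normalize `T` to be `0`. -/
def IsSYT (d : ℕ) (lam : Fin d → ℕ) (T : Fin d → ℕ → ℕ) : Prop :=
  (∀ i j, j < lam i → 1 ≤ T i j ∧ T i j ≤ ∑ k, lam k) ∧
  (∀ i j i' j', j < lam i → j' < lam i' → T i j = T i' j' → i = i' ∧ j = j') ∧
  (∀ m, 1 ≤ m → m ≤ ∑ k, lam k → ∃ i j, j < lam i ∧ T i j = m) ∧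
  (∀ i j j', j < j' → j' < lam i → T i j < T i j') ∧
  (∀ i i' j, i < i' → j < lam i' → T i j < T i' j) ∧
  (∀ i j, ¬ j < lam i → T i j = 0)

/-- `sytCount d lam` is the number `f^λ` of standard Young tableaux of shape `λ = lam`. -/
noncomputable def sytCount (d : ℕ) (lam : Fin d → ℕ) : ℕ :=
  Nat.card { T : Fin d → ℕ → ℕ // IsSYT d lam T }

/-- `lam` is a Young diagram with `n` boxes and at most `d` rows: a weakly decreasing
sequence of nonnegative integers summing to `n`. -/
def IsYoungDiagram (d n : ℕ) (lam : Fin d → ℕ) : Prop :=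
  Antitone lam ∧ ∑ i, lam i = n

/-- `1/m!` for an integer `m`, with the convention that it is `0` for negative `m`. -/
noncomputable def invFactorial (m : ℤ) : ℝ :=
  if 0 ≤ m then ((m.toNat).factorial : ℝ)⁻¹ else 0

open Matrix
lemma invFactorial_of_neg {m : ℤ} (h : m < 0) : invFactorial m = 0 := by
  rw [invFactorial, if_neg (by omega)]

lemma invFactorial_zero : invFactorial 0 = 1 := by simp [invFactorial]

lemma invFactorial_sub_one (m : ℤ) : invFactorial (m - 1) = m * invFactorial m := by
  rcases lt_trichotomy m 0 with h | h | h
  · rw [invFactorial_of_neg h, invFactorial_of_neg (by omega), mul_zero]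
  · subst h
    rw [invFactorial_of_neg (by norm_num), Int.cast_zero, zero_mul]
  · obtain ⟨k, rfl⟩ : ∃ k : ℕ, m = (k : ℤ) + 1 := ⟨(m - 1).toNat, by omega⟩
    rw [invFactorial, invFactorial, if_pos (by omega), if_pos (by omega)]
    have h1 : ((k : ℤ) + 1 - 1).toNat = k := by omega
    have h2 : ((k : ℤ) + 1).toNat = k + 1 := by omega
    rw [h1, h2, Nat.factorial_succ]
    have hk : ((k.factorial : ℝ)) ≠ 0 := Nat.cast_ne_zero.2 k.factorial_ne_zero
    push_cast
    field_simp

noncomputable def matM (d : ℕ) (lam : Fin d → ℕ) : Matrix (Fin d) (Fin d) ℝ :=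
  Matrix.of fun i j : Fin d => invFactorial ((lam i : ℤ) - (i : ℤ) + (j : ℤ))

noncomputable def rowR (d : ℕ) (lam : Fin d → ℕ) (i : Fin d) : Fin d → ℝ :=
  fun j => (((lam i : ℤ) - (i : ℤ) + (j : ℤ) : ℤ) : ℝ) * invFactorial ((lam i : ℤ) - (i : ℤ) + (j : ℤ))

lemma rowR_eq (d : ℕ) (lam : Fin d → ℕ) (i : Fin d) (j : Fin d) :
    rowR d lam i j = invFactorial ((lam i : ℤ) - (i : ℤ) + (j : ℤ) - 1) :=
  (invFactorial_sub_one _).symm ▸ rfl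

lemma sum_det_updateRow (d : ℕ) (lam : Fin d → ℕ) :
    ∑ i : Fin d, ((matM d lam).updateRow i (rowR d lam i)).det
      = (∑ i : Fin d, (lam i : ℝ)) * (matM d lam).det := by
  set M := matM d lam with hM
  have hsplit : ∀ i : Fin d, rowR d lam i
      = (((lam i : ℝ) - (i : ℝ)) • M i) + (fun j : Fin d => (j : ℝ) * M i j) := by
    intro i
    funext j
    simp only [rowR, Pi.add_apply, Pi.smul_apply, smul_eq_mul, hM, matM, Matrix.of_apply]
    push_cast
    ring
  have hterm : ∀ i : Fin d, (M.updateRow i (rowR d lam i)).det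
      = ((lam i : ℝ) - (i : ℝ)) * M.det + (M.updateRow i (fun j : Fin d => (j : ℝ) * M i j)).det := by
    intro i
    rw [hsplit i, Matrix.det_updateRow_add, Matrix.det_updateRow_smul,
      Matrix.updateRow_eq_self]
  -- the second term summed over i
  have hB : ∀ i : Fin d, (M.updateRow i (fun j : Fin d => (j : ℝ) * M i j)).det
      = ∑ j : Fin d, ((j : ℝ) * M i j) * M.adjugate j i := by
    intro i
    have hb : (fun j : Fin d => (j : ℝ) * M i j)
        = ∑ j : Fin d, ((j : ℝ) * M i j) • (Pi.single j 1 : Fin d → ℝ) := by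
      funext k
      rw [Finset.sum_apply]
      simp [Pi.single_apply]
    have hcr : ∀ b : Fin d → ℝ, (M.updateRow i b).det = Matrix.cramer Mᵀ b i := by
      intro b
      rw [Matrix.cramer_apply, Matrix.updateCol_transpose, Matrix.det_transpose]
    have hadj : ∀ j : Fin d, M.adjugate j i = Matrix.cramer Mᵀ (Pi.single j 1) i := fun j => rfl
    rw [hcr, hb, map_sum, Finset.sum_apply]
    refine Finset.sum_congr rfl fun j _ => ?_
    rw [LinearMap.map_smul, Pi.smul_apply, smul_eq_mul, hadj]
  have htr : ∑ i : Fin d, ∑ j : Fin d, ((j : ℝ) * M i j) * M.adjugate j i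
      = M.det * ∑ j : Fin d, (j : ℝ) := by
    have : ∑ i : Fin d, ∑ j : Fin d, ((j : ℝ) * M i j) * M.adjugate j i
        = Matrix.trace ((M * Matrix.diagonal (fun j : Fin d => (j : ℝ))) * M.adjugate) := by
      rw [Matrix.trace]
      refine Finset.sum_congr rfl fun i _ => ?_
      rw [Matrix.diag_apply, Matrix.mul_apply]
      refine Finset.sum_congr rfl fun j _ => ?_
      rw [Matrix.mul_diagonal]
      ring
    rw [this, Matrix.trace_mul_comm, ← Matrix.mul_assoc, Matrix.adjugate_mul,
      Matrix.smul_mul, Matrix.one_mul, Matrix.trace_smul, Matrix.trace_diagonal]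
    simp [smul_eq_mul]
  calc ∑ i : Fin d, (M.updateRow i (rowR d lam i)).det
      = ∑ i : Fin d, (((lam i : ℝ) - (i : ℝ)) * M.det
          + (M.updateRow i (fun j : Fin d => (j : ℝ) * M i j)).det) := by
        exact Finset.sum_congr rfl fun i _ => hterm i
    _ = (∑ i : Fin d, ((lam i : ℝ) - (i : ℝ))) * M.det
          + ∑ i : Fin d, ∑ j : Fin d, ((j : ℝ) * M i j) * M.adjugate j i := by
        rw [Finset.sum_add_distrib, ← Finset.sum_mul]
        congr 1
        exact Finset.sum_congr rfl fun i _ => hB i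
    _ = (∑ i : Fin d, (lam i : ℝ)) * M.det := by
        rw [htr, Finset.sum_sub_distrib]
        ring

def cornersSet (d : ℕ) (lam : Fin d → ℕ) : Finset (Fin d) :=
  Finset.univ.filter (fun i => 1 ≤ lam i ∧ ∀ i' : Fin d, i < i' → lam i' < lam i)

def lamDel (d : ℕ) (lam : Fin d → ℕ) (i : Fin d) : Fin d → ℕ :=
  Function.update lam i (lam i - 1)

lemma lamDel_antitone {d : ℕ} {lam : Fin d → ℕ} (hlam : Antitone lam) {i : Fin d}
    (hi : i ∈ cornersSet d lam) : Antitone (lamDel d lam i) := by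
  simp only [cornersSet, Finset.mem_filter] at hi
  intro k l hkl
  unfold lamDel
  rcases eq_or_ne k i with rfl | hk
  · rcases eq_or_ne l k with rfl | hl
    · exact le_refl _
    · rw [Function.update_self, Function.update_of_ne hl]
      have : k < l := lt_of_le_of_ne hkl (fun h => hl h.symm)
      have := hi.2.2 l this
      omega
  · rw [Function.update_of_ne hk]
    rcases eq_or_ne l i with rfl | hl
    · rw [Function.update_self]
      have := hlam hkl
      omega
    · rw [Function.update_of_ne hl]
      exact hlam hkl

lemma lamDel_sum {d : ℕ} {lam : Fin d → ℕ} {i : Fin d} (hi : 1 ≤ lam i) :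
    ∑ k, lamDel d lam i k = (∑ k, lam k) - 1 := by
  have h1 : ∑ k, lamDel d lam i k = (lam i - 1) + ∑ k ∈ Finset.univ.erase i, lam k := by
    rw [lamDel, ← Finset.add_sum_erase _ _ (Finset.mem_univ i), Function.update_self]
    congr 1
    exact Finset.sum_congr rfl fun k hk => Function.update_of_ne (Finset.ne_of_mem_erase hk) _ _
  have h2 : lam i + ∑ k ∈ Finset.univ.erase i, lam k = ∑ k, lam k :=
    Finset.add_sum_erase _ _ (Finset.mem_univ i)
  omega

/-- The key determinant recurrence. -/
lemma det_rec (d : ℕ) (lam : Fin d → ℕ) (hlam : Antitone lam) :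
    ((∑ i, lam i : ℕ) : ℝ) * (matM d lam).det
      = ∑ i ∈ cornersSet d lam, (matM d (lamDel d lam i)).det := by
  have key : ∀ i ∈ cornersSet d lam,
      (matM d (lamDel d lam i)) = (matM d lam).updateRow i (rowR d lam i) := by
    intro i hi
    simp only [cornersSet, Finset.mem_filter] at hi
    ext i' j
    rcases eq_or_ne i' i with rfl | h
    · rw [Matrix.updateRow_self, rowR_eq]
      simp only [matM, Matrix.of_apply, lamDel, Function.update_self]
      congr 1
      have : 1 ≤ lam i' := hi.2.1
      push_cast [Nat.cast_sub this]
      ring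
    · rw [Matrix.updateRow_ne h]
      simp only [matM, Matrix.of_apply, lamDel, Function.update_of_ne h]
  have zero : ∀ i ∈ Finset.univ \ cornersSet d lam,
      ((matM d lam).updateRow i (rowR d lam i)).det = 0 := by
    intro i hi
    simp only [Finset.mem_sdiff, Finset.mem_univ, true_and, cornersSet,
      Finset.mem_filter, not_and, not_forall, not_lt] at hi
    by_cases h1 : 1 ≤ lam i
    · obtain ⟨i', hii', hgei⟩ := hi h1
      -- lam (i+1) = lam i, use duplicate rows i and i+1
      have hd : (i : ℕ) + 1 < d := lt_of_le_of_lt (by exact_mod_cast hii') i'.isLt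
      set i1 : Fin d := ⟨(i : ℕ) + 1, hd⟩ with hi1
      have hlam1 : lam i1 = lam i := by
        have h1le : i ≤ i1 := by simp [hi1, Fin.le_def]
        have h2le : i1 ≤ i' := by simp [hi1, Fin.le_def]; exact hii'
        have := hlam h1le
        have := hlam h2le
        have := hlam (le_of_lt hii')
        omega
      have hne : i ≠ i1 := by simp [hi1, Fin.ext_iff]
      apply Matrix.det_zero_of_row_eq hne
      rw [Matrix.updateRow_self, Matrix.updateRow_ne hne.symm]
      funext j
      rw [rowR_eq]
      have hlam1' : lam ⟨(i : ℕ) + 1, hd⟩ = lam i := hlam1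
      simp only [matM, Matrix.of_apply, hlam1, hi1, hlam1']
      congr 1
      push_cast
      ring
    · have h0 : lam i = 0 := by omega
      by_cases hd : (i : ℕ) + 1 < d
      · set i1 : Fin d := ⟨(i : ℕ) + 1, hd⟩ with hi1
        have hlam1 : lam i1 = 0 := by
          have : i ≤ i1 := by simp [hi1, Fin.le_def]
          have := hlam this
          omega
        have hne : i ≠ i1 := by simp [hi1, Fin.ext_iff]
        apply Matrix.det_zero_of_row_eq hne
        rw [Matrix.updateRow_self, Matrix.updateRow_ne hne.symm]
        funext j
        rw [rowR_eq]
        have hlam1' : lam ⟨(i : ℕ) + 1, hd⟩ = 0 := hlam1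
        simp only [matM, Matrix.of_apply, hlam1, h0, hi1, hlam1']
        congr 1
        push_cast
        ring
      · apply Matrix.det_eq_zero_of_row_eq_zero i
        intro j
        rw [Matrix.updateRow_self, rowR_eq, h0]
        apply invFactorial_of_neg
        have : (j : ℕ) < d := j.isLt
        have : (j : ℕ) ≤ (i : ℕ) := by omega
        push_cast
        omega
  calc ((∑ i, lam i : ℕ) : ℝ) * (matM d lam).det
      = ∑ i : Fin d, ((matM d lam).updateRow i (rowR d lam i)).det := by
        rw [sum_det_updateRow]; push_cast; ring
    _ = ∑ i ∈ cornersSet d lam, ((matM d lam).updateRow i (rowR d lam i)).det := by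
        rw [← Finset.sum_subset (Finset.subset_univ (cornersSet d lam))]
        intro x _ hx
        exact zero x (Finset.mem_sdiff.mpr ⟨Finset.mem_univ x, hx⟩)
    _ = ∑ i ∈ cornersSet d lam, (matM d (lamDel d lam i)).det :=
        Finset.sum_congr rfl fun i hi => by rw [key i hi]

lemma syt_le_sum {d : ℕ} {lam : Fin d → ℕ} {T : Fin d → ℕ → ℕ} (hT : IsSYT d lam T)
    (i : Fin d) (j : ℕ) : T i j ≤ ∑ k, lam k := by
  by_cases h : j < lam i
  · exact (hT.1 i j h).2
  · rw [hT.2.2.2.2.2 i j h]; exact Nat.zero_le _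

lemma lam_le_sum {d : ℕ} (lam : Fin d → ℕ) (i : Fin d) : lam i ≤ ∑ k, lam k :=
  Finset.single_le_sum (fun k _ => Nat.zero_le (lam k)) (Finset.mem_univ i)

lemma finite_syt (d : ℕ) (lam : Fin d → ℕ) : Finite { T : Fin d → ℕ → ℕ // IsSYT d lam T } := by
  set n := ∑ k, lam k with hn
  apply Finite.of_injective
    (fun T : { T : Fin d → ℕ → ℕ // IsSYT d lam T } =>
      (fun (i : Fin d) (j : Fin n) => (⟨min (T.1 i (j : ℕ)) n, by omega⟩ : Fin (n + 1))))
  intro T S h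
  have key : ∀ (U : { T : Fin d → ℕ → ℕ // IsSYT d lam T }) (i : Fin d) (j : ℕ),
      j < n → min (U.1 i j) n = U.1 i j := fun U i j _ => min_eq_left (syt_le_sum U.2 i j)
  apply Subtype.ext
  funext i j
  by_cases hj : j < n
  · have := congrFun (congrFun h i) ⟨j, hj⟩
    have h1 := key T i j hj
    have h2 := key S i j hj
    simp only [Fin.mk.injEq] at this
    omega
  · have hl : lam i ≤ n := lam_le_sum lam i
    rw [T.2.2.2.2.2.2 i j (by omega), S.2.2.2.2.2.2 i j (by omega)]

lemma sytCount_base (d : ℕ) (lam : Fin d → ℕ) (h : ∀ k, lam k = 0) : sytCount d lam = 1 := by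
  have hsum : ∑ k, lam k = 0 := Finset.sum_eq_zero fun k _ => h k
  have hmem : IsSYT d lam (fun _ _ => 0) := by
    refine ⟨fun i j hj => absurd hj (by simp [h]), fun i j i' j' hj => absurd hj (by simp [h]),
      fun m hm1 hm2 => absurd (hm1.trans (hm2.trans_eq hsum)) (by omega),
      fun i j j' hjj' hj' => absurd hj' (by simp [h]),
      fun i i' j hii' hj => absurd hj (by simp [h]), fun i j _ => rfl⟩
  have : ∀ T : { T : Fin d → ℕ → ℕ // IsSYT d lam T }, T.1 = fun _ _ => 0 := by
    intro T
    funext i j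
    exact T.2.2.2.2.2.2 i j (by simp [h])
  have hsub : Subsingleton { T : Fin d → ℕ → ℕ // IsSYT d lam T } :=
    ⟨fun T S => Subtype.ext ((this T).trans (this S).symm)⟩
  have hne : Nonempty { T : Fin d → ℕ → ℕ // IsSYT d lam T } := ⟨⟨_, hmem⟩⟩
  exact Nat.card_eq_one_iff_unique.mpr ⟨hsub, hne⟩

def delT {d : ℕ} (T : Fin d → ℕ → ℕ) (i : Fin d) (c : ℕ) : Fin d → ℕ → ℕ :=
  fun i' j' => if i' = i ∧ j' = c then 0 else T i' j'

def addT {d : ℕ} (T : Fin d → ℕ → ℕ) (i : Fin d) (c m : ℕ) : Fin d → ℕ → ℕ :=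
  fun i' j' => if i' = i ∧ j' = c then m else T i' j'

lemma mem_cornersSet {d : ℕ} {lam : Fin d → ℕ} {i : Fin d} :
    i ∈ cornersSet d lam ↔ 1 ≤ lam i ∧ ∀ i' : Fin d, i < i' → lam i' < lam i := by
  simp [cornersSet]

lemma top_entry {d : ℕ} {lam : Fin d → ℕ} {T : Fin d → ℕ → ℕ}
    (hT : IsSYT d lam T) (hn : 1 ≤ ∑ k, lam k) :
    ∃ i : Fin d, i ∈ cornersSet d lam ∧ T i (lam i - 1) = ∑ k, lam k := by
  obtain ⟨i, j, hj, hTij⟩ := hT.2.2.1 _ hn le_rfl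
  have hji : j = lam i - 1 := by
    by_contra h
    have h1 : j + 1 < lam i := by omega
    have h2 := hT.2.2.2.1 i j (j + 1) (Nat.lt_succ_self j) h1
    have h3 := (hT.1 i (j + 1) h1).2
    omega
  refine ⟨i, mem_cornersSet.mpr ⟨by omega, ?_⟩, by rw [← hji]; exact hTij⟩
  intro i' hii'
  by_contra h
  push_neg at h
  have hj' : j < lam i' := by omega
  have h5 := hT.2.2.2.2.1 i i' j hii' hj'
  have h6 := (hT.1 i' j hj').2
  omega

lemma lamDel_apply {d : ℕ} (lam : Fin d → ℕ) (i i' : Fin d) :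
    lamDel d lam i i' = if i' = i then lam i - 1 else lam i' := Function.update_apply lam i _ i'

lemma isSYT_delT {d : ℕ} {lam : Fin d → ℕ} (hlam : Antitone lam) {T : Fin d → ℕ → ℕ}
    (hT : IsSYT d lam T) {i : Fin d} (hi : i ∈ cornersSet d lam)
    (hTn : T i (lam i - 1) = ∑ k, lam k) :
    IsSYT d (lamDel d lam i) (delT T i (lam i - 1)) := by
  obtain ⟨hi1, hic⟩ := mem_cornersSet.mp hi
  set n := ∑ k, lam k with hndef
  have hnn : 1 ≤ n := le_trans hi1 (lam_le_sum lam i)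
  have hsum : ∑ k, lamDel d lam i k = n - 1 := lamDel_sum hi1
  have hbox : ∀ i' j', j' < lamDel d lam i i' → j' < lam i' ∧ ¬(i' = i ∧ j' = lam i - 1) := by
    intro i' j' h
    rw [lamDel_apply] at h
    split_ifs at h with hii
    · subst hii; exact ⟨by omega, by omega⟩
    · exact ⟨h, fun hc => hii hc.1⟩
  have huniq : ∀ i' j', j' < lam i' → T i' j' = n → i' = i ∧ j' = lam i - 1 :=
    fun i' j' hj' hv => hT.2.1 i' j' i (lam i - 1) hj' (by omega) (hv.trans hTn.symm)
  refine ⟨?_, ?_, ?_, ?_, ?_, ?_⟩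
  · intro i' j' hj'
    obtain ⟨hb, hne⟩ := hbox i' j' hj'
    rw [delT, if_neg hne, hsum]
    have h1 := hT.1 i' j' hb
    rcases eq_or_ne (T i' j') n with he | he
    · exact absurd (huniq i' j' hb he) hne
    · omega
  · intro i' j' i'' j'' h1 h2 heq
    rw [delT, if_neg (hbox i' j' h1).2, delT, if_neg (hbox i'' j'' h2).2] at heq
    exact hT.2.1 i' j' i'' j'' (hbox i' j' h1).1 (hbox i'' j'' h2).1 heq
  · intro m hm1 hm2
    rw [hsum] at hm2
    obtain ⟨i', j', hj', hv⟩ := hT.2.2.1 m hm1 (by omega)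
    have hne : ¬(i' = i ∧ j' = lam i - 1) := by
      rintro ⟨rfl, rfl⟩
      rw [hTn] at hv
      omega
    refine ⟨i', j', ?_, by rw [delT, if_neg hne]; exact hv⟩
    rw [lamDel_apply]
    split_ifs with hii
    · subst hii; have : j' ≠ lam i' - 1 := fun h => hne ⟨rfl, h⟩; omega
    · exact hj'
  · intro i' j j' hjj' hj'
    have hbj' := hbox i' j' hj'
    have hbj : j < lamDel d lam i i' := lt_trans hjj' hj'
    have hbjj := hbox i' j hbj
    rw [delT, if_neg hbjj.2, delT, if_neg hbj'.2]
    exact hT.2.2.2.1 i' j j' hjj' hbj'.1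
  · intro i' i'' j hii'' hj
    have hb2 := hbox i'' j hj
    have hb1 : j < lam i' ∧ ¬(i' = i ∧ j = lam i - 1) := by
      rcases eq_or_ne i' i with rfl | hne
      · have hlt := hic i'' hii''
        constructor
        · omega
        · rintro ⟨-, rfl⟩; omega
      · exact ⟨lt_of_lt_of_le hb2.1 (hlam (le_of_lt hii'')), fun hc => hne hc.1⟩
    rw [delT, if_neg hb1.2, delT, if_neg hb2.2]
    exact hT.2.2.2.2.1 i' i'' j hii'' hb2.1
  · intro i' j' hnb
    rw [delT]
    split_ifs with hc
    · rfl
    · apply hT.2.2.2.2.2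
      rw [lamDel_apply] at hnb
      split_ifs at hnb with hii
      · subst hii
        have : j' ≠ lam i' - 1 := fun h => hc ⟨rfl, h⟩
        omega
      · exact hnb

lemma isSYT_addT {d : ℕ} {lam : Fin d → ℕ} (hlam : Antitone lam) {i : Fin d}
    (hi : i ∈ cornersSet d lam) {T' : Fin d → ℕ → ℕ}
    (hT' : IsSYT d (lamDel d lam i) T') :
    IsSYT d lam (addT T' i (lam i - 1) (∑ k, lam k)) := by
  obtain ⟨hi1, hic⟩ := mem_cornersSet.mp hi
  have hnn : 1 ≤ ∑ k, lam k := le_trans hi1 (lam_le_sum lam i)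
  have hsum : ∑ k, lamDel d lam i k = (∑ k, lam k) - 1 := lamDel_sum hi1
  have hbox : ∀ i' j', j' < lam i' → ¬(i' = i ∧ j' = lam i - 1) → j' < lamDel d lam i i' := by
    intro i' j' h hne
    rw [lamDel_apply]
    split_ifs with hii
    · subst hii
      have : j' ≠ lam i' - 1 := fun hc => hne ⟨rfl, hc⟩
      omega
    · exact h
  have hbox' : ∀ i' j', j' < lamDel d lam i i' → j' < lam i' := by
    intro i' j' h
    rw [lamDel_apply] at h
    split_ifs at h with hii
    · subst hii; omega
    · exact h
  have hub : ∀ i' j', j' < lamDel d lam i i' → T' i' j' ≤ (∑ k, lam k) - 1 := by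
    intro i' j' h
    have h2 := (hT'.1 i' j' h).2
    rw [hsum] at h2
    exact h2
  refine ⟨?_, ?_, ?_, ?_, ?_, ?_⟩
  · intro i' j' hj'
    simp only [addT]
    split_ifs with hc
    · omega
    · have hb := hbox i' j' hj' hc
      have h2 := hT'.1 i' j' hb
      omega
  · intro a b a' b' h1 h2 heq
    simp only [addT] at heq
    split_ifs at heq with hc1 hc2 hc3
    · exact ⟨hc1.1.trans hc2.1.symm, hc1.2.trans hc2.2.symm⟩
    · have h4 := hub a' b' (hbox a' b' h2 hc2)
      omega
    · have h4 := hub a b (hbox a b h1 hc1)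
      omega
    · exact hT'.2.1 a b a' b' (hbox a b h1 hc1) (hbox a' b' h2 hc3) heq
  · intro m hm1 hm2
    rcases eq_or_ne m (∑ k, lam k) with rfl | hne
    · exact ⟨i, lam i - 1, by omega, by rw [addT, if_pos ⟨rfl, rfl⟩]⟩
    · obtain ⟨i', j', hj', hv⟩ := hT'.2.2.1 m hm1 (by omega)
      refine ⟨i', j', hbox' i' j' hj', ?_⟩
      rw [addT, if_neg ?_]
      · exact hv
      · intro hcon
        rw [hcon.1, lamDel_apply, if_pos rfl] at hj'
        have h2 := hcon.2
        omega
  · intro i' j j' hjj' hj'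
    simp only [addT]
    split_ifs with hc1 hc2 hc3
    · have h4 := hc1.2
      have h5 := hc2.2
      omega
    · have h4 := hc1.2
      rw [hc1.1] at hj'
      omega
    · have hb : j < lamDel d lam i i' := by
        rw [hc3.1, lamDel_apply, if_pos rfl]
        have h2 := hc3.2
        omega
      have h4 := hub i' j hb
      omega
    · exact hT'.2.2.2.1 i' j j' hjj' (hbox i' j' hj' hc3)
  · intro i' i'' j hii'' hj
    simp only [addT]
    split_ifs with hc1 hc2 hc3
    · rw [hc1.1, hc2.1] at hii''
      exact absurd hii'' (lt_irrefl i)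
    · have h4 := hic i'' (hc1.1 ▸ hii'')
      have h5 := hc1.2
      have h6 : j < lam i'' := hj
      omega
    · have hne : i' ≠ i := by
        rw [← hc3.1]
        exact ne_of_lt hii''
      have hb : j < lamDel d lam i i' := by
        rw [lamDel_apply, if_neg hne]
        calc j < lam i'' := hj
          _ ≤ lam i' := hlam (le_of_lt hii'')
      have h4 := hub i' j hb
      omega
    · exact hT'.2.2.2.2.1 i' i'' j hii'' (hbox i'' j hj hc3)
  · intro i' j' hnb
    rw [addT, if_neg ?_]
    · apply hT'.2.2.2.2.2
      intro hcon
      exact hnb (hbox' i' j' hcon)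
    · intro hcon
      rw [hcon.1, hcon.2] at hnb
      omega

lemma delT_addT {d : ℕ} {lam : Fin d → ℕ} {i : Fin d} {T' : Fin d → ℕ → ℕ}
    (hT' : IsSYT d (lamDel d lam i) T') (m : ℕ) :
    delT (addT T' i (lam i - 1) m) i (lam i - 1) = T' := by
  funext i' j'
  rw [delT, addT]
  split_ifs with hc
  · have h0 : ¬ (lam i - 1) < lamDel d lam i i := by rw [lamDel_apply, if_pos rfl]; omega
    have h1 := hT'.2.2.2.2.2 i (lam i - 1) h0
    rw [hc.1, hc.2, h1]
  · rfl

lemma addT_delT {d : ℕ} {T : Fin d → ℕ → ℕ} {i : Fin d} {c m : ℕ} (h : T i c = m) :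
    addT (delT T i c) i c m = T := by
  funext i' j'
  rw [addT, delT]
  split_ifs with hc
  · obtain ⟨rfl, rfl⟩ := hc; exact h.symm
  · rfl

lemma sytCount_rec (d : ℕ) (lam : Fin d → ℕ) (hlam : Antitone lam)
    (hn : 1 ≤ ∑ k, lam k) :
    sytCount d lam = ∑ i ∈ cornersSet d lam, sytCount d (lamDel d lam i) := by
  classical
  set n := ∑ k, lam k with hndef
  -- the placing map
  let g : (Σ i : {i // i ∈ cornersSet d lam},
        { T : Fin d → ℕ → ℕ // IsSYT d (lamDel d lam i.1) T }) →
      { T : Fin d → ℕ → ℕ // IsSYT d lam T } :=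
    fun x => ⟨addT x.2.1 x.1.1 (lam x.1.1 - 1) n, isSYT_addT hlam x.1.2 x.2.2⟩
  have hgbij : Function.Bijective g := by
    constructor
    · rintro ⟨⟨i1, hi1⟩, ⟨T1, hT1⟩⟩ ⟨⟨i2, hi2⟩, ⟨T2, hT2⟩⟩ h
      simp only [g, Subtype.mk.injEq] at h
      have hii : i1 = i2 := by
        have hv1 : addT T1 i1 (lam i1 - 1) n i1 (lam i1 - 1) = n := by
          rw [addT, if_pos ⟨rfl, rfl⟩]
        have hv2 : addT T2 i2 (lam i2 - 1) n i2 (lam i2 - 1) = n := by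
          rw [addT, if_pos ⟨rfl, rfl⟩]
        have hb1 : lam i1 - 1 < lam i1 := by
          have := (mem_cornersSet.mp hi1).1; omega
        have hb2 : lam i2 - 1 < lam i2 := by
          have := (mem_cornersSet.mp hi2).1; omega
        have hT1' : IsSYT d (lamDel d lam i1) T1 := hT1
        have := (isSYT_addT hlam hi1 hT1').2.1 i1 (lam i1 - 1) i2 (lam i2 - 1) hb1
          hb2 (by rw [hv1, h, hv2])
        exact this.1
      subst hii
      have hTT : T1 = T2 := by
        have hT1' : IsSYT d (lamDel d lam i1) T1 := hT1
        have hT2' : IsSYT d (lamDel d lam i1) T2 := hT2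
        have hdel := congrArg (fun U => delT U i1 (lam i1 - 1)) h
        simpa only [delT_addT hT1' n, delT_addT hT2' n] using hdel
      subst hTT
      rfl
    · rintro ⟨T, hT⟩
      obtain ⟨i, hi, hTn⟩ := top_entry hT hn
      refine ⟨⟨⟨i, hi⟩, ⟨delT T i (lam i - 1), isSYT_delT hlam hT hi hTn⟩⟩, ?_⟩
      simp only [g, Subtype.mk.injEq]
      exact addT_delT hTn
  have hcard := Nat.card_eq_of_bijective g hgbij
  haveI : ∀ i : {i // i ∈ cornersSet d lam},
      Finite { T : Fin d → ℕ → ℕ // IsSYT d (lamDel d lam i.1) T } :=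
    fun i => finite_syt d _
  haveI hfq : ∀ i : {i // i ∈ cornersSet d lam},
      Fintype { T : Fin d → ℕ → ℕ // IsSYT d (lamDel d lam i.1) T } :=
    fun i => Fintype.ofFinite _
  calc sytCount d lam
      = Nat.card (Σ i : {i // i ∈ cornersSet d lam},
          { T : Fin d → ℕ → ℕ // IsSYT d (lamDel d lam i.1) T }) := hcard.symm
    _ = Fintype.card (Σ i : {i // i ∈ cornersSet d lam},
          { T : Fin d → ℕ → ℕ // IsSYT d (lamDel d lam i.1) T }) := Nat.card_eq_fintype_card
    _ = ∑ i : {i // i ∈ cornersSet d lam},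
          Fintype.card { T : Fin d → ℕ → ℕ // IsSYT d (lamDel d lam i.1) T } :=
        Fintype.card_sigma
    _ = ∑ i : {i // i ∈ cornersSet d lam}, sytCount d (lamDel d lam i.1) := by
        refine Finset.sum_congr rfl fun i _ => ?_
        rw [sytCount, Nat.card_eq_fintype_card]
    _ = ∑ i ∈ cornersSet d lam, sytCount d (lamDel d lam i) :=
        Finset.sum_coe_sort (cornersSet d lam) (fun i => sytCount d (lamDel d lam i))

lemma det_base (d : ℕ) (lam : Fin d → ℕ) (h : ∀ k, lam k = 0) : (matM d lam).det = 1 := by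
  have htri : (matM d lam).BlockTriangular id := by
    intro i j hij
    simp only [matM, Matrix.of_apply, h]
    apply invFactorial_of_neg
    have : (j : ℕ) < (i : ℕ) := hij
    push_cast
    omega
  rw [Matrix.det_of_upperTriangular htri]
  apply Finset.prod_eq_one
  intro i _
  have harg : ((lam i : ℤ) - (i : ℤ) + (i : ℤ)) = 0 := by rw [h i]; ring
  simp only [matM, Matrix.of_apply, harg, invFactorial_zero]

theorem sytCount_eq_factorial_mul_det'
    (d : ℕ) (lam : Fin d → ℕ) (hlam : Antitone lam)
    (n : ℕ) (hn : ∑ i, lam i = n) :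
    (sytCount d lam : ℝ) = (n.factorial : ℝ) * (matM d lam).det := by
  induction n using Nat.strong_induction_on generalizing lam with
  | _ n ih =>
    rcases Nat.eq_zero_or_pos n with rfl | hpos
    · have h0 : ∀ k, lam k = 0 := fun k =>
        (Finset.sum_eq_zero_iff.mp hn) k (Finset.mem_univ k)
      rw [sytCount_base d lam h0, det_base d lam h0]
      simp
    · have hn1 : 1 ≤ ∑ k, lam k := hn ▸ hpos
      rw [sytCount_rec d lam hlam hn1]
      push_cast
      have hsum : ∀ i ∈ cornersSet d lam, (sytCount d (lamDel d lam i) : ℝ)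
          = ((n - 1).factorial : ℝ) * (matM d (lamDel d lam i)).det := by
        intro i hi
        apply ih (n - 1) (by omega) _ (lamDel_antitone hlam hi)
        rw [lamDel_sum (mem_cornersSet.mp hi).1, hn]
      calc (∑ i ∈ cornersSet d lam, (sytCount d (lamDel d lam i) : ℝ))
          = ∑ i ∈ cornersSet d lam,
              ((n - 1).factorial : ℝ) * (matM d (lamDel d lam i)).det :=
            Finset.sum_congr rfl hsum
        _ = ((n - 1).factorial : ℝ)
              * ∑ i ∈ cornersSet d lam, (matM d (lamDel d lam i)).det := by
            rw [Finset.mul_sum]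
        _ = ((n - 1).factorial : ℝ) * ((n : ℝ) * (matM d lam).det) := by
            rw [← det_rec d lam hlam, hn]
        _ = (n.factorial : ℝ) * (matM d lam).det := by
            have hfac : n * (n - 1).factorial = n.factorial := Nat.mul_factorial_pred (by omega)
            rw [← hfac]
            push_cast
            ring


/-- The determinantal formula of Frobenius and MacMahon: the number of standard Young
tableaux of shape `λ = (λ₁, …, λ_d)` with `n` boxes equals
`n! · det(1/(λ_i - i + j)!)_{1 ≤ i,j ≤ d}`. -/
theorem sytCount_eq_factorial_mul_det
    (d : ℕ) (hd : 1 ≤ d) (lam : Fin d → ℕ) (hlam : Antitone lam)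
    (n : ℕ) (hn : ∑ i, lam i = n) :
    (sytCount d lam : ℝ) =
      (n.factorial : ℝ) *
        Matrix.det (Matrix.of fun i j : Fin d =>
          invFactorial ((lam i : ℤ) - (i : ℤ) + (j : ℤ))) := by
  rw [sytCount_eq_factorial_mul_det' d lam hlam n hn]
  rfl
end

section
/- Fix an integer d ≥ 1. For each n ≥ 1 define f_n : ℝ → ℝ to be the function which is constant on each interval [ (k − n/d)/√(n/d), (k+1 − n/d)/√(n/d) ) for every integer k, and which satisfies f_n( (k − n/d)/√(n/d) ) = √(n/d) · (n/d)^k e^{−n/d} / k! if k is a non-negative integer, and 0 if k is a negative integer. Then there exist constants C₁ < 0 and C₂ > 0 (independent of n) with the following properties: (i) for all n ≥ 1 and all points y₁ = (k₁ − n/d)/√(n/d) and y₂ = (k₂ − n/d)/√(n/d) with k₁, k₂ integers and y₁ < y₂ ≤ C₁, one has f_n(y₁) ≤ f_n(y₂) · e^{y₁ − y₂}; (ii) for all n ≥ 1 and all such points with C₂ ≤ y₁ < y₂, one has f_n(y₂) ≤ f_n(y₁) · e^{y₁ − y₂}. -/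
/-- The point `(k - n/d)/√(n/d)`, the left endpoint of the `k`-th interval of constancy
of `f_n`. -/
noncomputable def gridPt (d n : ℕ) (k : ℤ) : ℝ :=
  ((k : ℝ) - (n : ℝ) / d) / Real.sqrt ((n : ℝ) / d)

noncomputable def G (c : ℝ) (m : ℕ) : ℝ :=
  Real.sqrt c * c ^ m * Real.exp (-c) / m.factorial

lemma G_nonneg (c : ℝ) (hc : 0 ≤ c) (m : ℕ) : 0 ≤ G c m := by
  unfold G; positivity

lemma G_succ (c : ℝ) (hc : 0 < c) (m : ℕ) :
    G c m = G c (m + 1) * ((m + 1 : ℝ) / c) := by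
  unfold G
  rw [Nat.factorial_succ, pow_succ]
  push_cast
  have h1 : (m.factorial : ℝ) ≠ 0 := Nat.cast_ne_zero.mpr m.factorial_ne_zero
  have h2 : ((m : ℝ) + 1) ≠ 0 := by positivity
  field_simp

lemma fn_gridPt (d n : ℕ) (hd : 1 ≤ d) (hn : 1 ≤ n) (k : ℤ) :
    fn d n (gridPt d n k) = if 0 ≤ k then G ((n : ℝ) / d) k.toNat else 0 := by
  have hc : (0 : ℝ) < (n : ℝ) / d := by
    apply div_pos <;> exact_mod_cast Nat.lt_of_lt_of_le Nat.zero_lt_one ‹_›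
  have hs : 0 < Real.sqrt ((n : ℝ) / d) := Real.sqrt_pos.mpr hc
  unfold fn gridPt G
  simp only [div_mul_cancel₀ _ hs.ne', sub_add_cancel, Int.floor_intCast]

lemma fn_nonneg (d n : ℕ) (y : ℝ) : 0 ≤ fn d n y := by
  unfold fn
  dsimp only
  split
  · positivity
  · exact le_refl 0

lemma step_left (c : ℝ) (hc : 0 < c) (m : ℕ) (h : (m : ℝ) + 1 ≤ c - Real.sqrt c) :
    G c m ≤ G c (m + 1) * Real.exp (-(1 / Real.sqrt c)) := by
  have hs : 0 < Real.sqrt c := Real.sqrt_pos.mpr hc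
  rw [G_succ c hc m]
  apply mul_le_mul_of_nonneg_left _ (G_nonneg c hc.le _)
  have hsc : Real.sqrt c / c = 1 / Real.sqrt c := by
    rw [eq_div_iff hs.ne', div_mul_eq_mul_div, Real.mul_self_sqrt hc.le, div_self hc.ne']
  have h1 : ((m : ℝ) + 1) / c ≤ 1 - 1 / Real.sqrt c := by
    rw [← hsc]
    rw [div_le_iff₀ hc, sub_mul, one_mul, div_mul_cancel₀ _ hc.ne']
    linarith
  calc ((m : ℝ) + 1) / c ≤ 1 - 1 / Real.sqrt c := h1
    _ ≤ Real.exp (-(1 / Real.sqrt c)) := by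
        have := Real.add_one_le_exp (-(1 / Real.sqrt c))
        linarith

lemma step_right (c C₂ : ℝ) (hc : 0 < c) (hC : Real.exp (1 / Real.sqrt c) ≤ 1 + C₂ / Real.sqrt c)
    (m : ℕ) (h : c + C₂ * Real.sqrt c ≤ (m : ℝ)) :
    G c (m + 1) ≤ G c m * Real.exp (-(1 / Real.sqrt c)) := by
  have hs : 0 < Real.sqrt c := Real.sqrt_pos.mpr hc
  have key : c / ((m : ℝ) + 1) ≤ Real.exp (-(1 / Real.sqrt c)) := by
    rw [Real.exp_neg, ← one_div, div_le_div_iff₀ (by positivity) (Real.exp_pos _), one_mul]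
    calc c * Real.exp (1 / Real.sqrt c) ≤ c * (1 + C₂ / Real.sqrt c) :=
          mul_le_mul_of_nonneg_left hC hc.le
      _ = c + C₂ * (c / Real.sqrt c) := by ring
      _ = c + C₂ * Real.sqrt c := by rw [Real.div_sqrt]
      _ ≤ (m : ℝ) + 1 := by linarith
  have hG : G c (m + 1) = G c m * (c / ((m : ℝ) + 1)) := by
    rw [G_succ c hc m]
    field_simp
  rw [hG]
  exact mul_le_mul_of_nonneg_left key (G_nonneg c hc.le m)

lemma main_left (c : ℝ) (hc : 0 < c) (m₁ m₂ : ℕ) (h12 : m₁ < m₂)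
    (h2 : (m₂ : ℝ) ≤ c - Real.sqrt c) :
    G c m₁ ≤ G c m₂ * Real.exp (((m₁ : ℝ) - m₂) / Real.sqrt c) := by
  have hs : 0 < Real.sqrt c := Real.sqrt_pos.mpr hc
  induction m₂, h12 using Nat.le_induction with
  | base =>
      have hb : (m₁ : ℝ) + 1 ≤ c - Real.sqrt c := by push_cast at h2; linarith
      have := step_left c hc m₁ hb
      convert this using 2
      push_cast
      field_simp
      congr 1; ring
  | succ m₂ h12 ih =>
      have h2' : (m₂ : ℝ) ≤ c - Real.sqrt c := by push_cast at h2 ⊢; linarith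
      have hb : (m₂ : ℝ) + 1 ≤ c - Real.sqrt c := by push_cast at h2; linarith
      have hstep := step_left c hc m₂ hb
      calc G c m₁ ≤ G c m₂ * Real.exp (((m₁ : ℝ) - m₂) / Real.sqrt c) := ih h2'
        _ ≤ (G c (m₂ + 1) * Real.exp (-(1 / Real.sqrt c))) * Real.exp (((m₁ : ℝ) - m₂) / Real.sqrt c) :=
            mul_le_mul_of_nonneg_right hstep (Real.exp_nonneg _)
        _ = G c (m₂ + 1) * Real.exp (((m₁ : ℝ) - ((m₂ : ℕ) + 1 : ℕ)) / Real.sqrt c) := by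
            rw [mul_assoc, ← Real.exp_add]
            congr 2
            push_cast
            field_simp
            ring

lemma main_right (c C₂ : ℝ) (hc : 0 < c)
    (hC : Real.exp (1 / Real.sqrt c) ≤ 1 + C₂ / Real.sqrt c)
    (m₁ m₂ : ℕ) (h12 : m₁ < m₂) (h1 : c + C₂ * Real.sqrt c ≤ (m₁ : ℝ)) :
    G c m₂ ≤ G c m₁ * Real.exp (((m₁ : ℝ) - m₂) / Real.sqrt c) := by
  have hs : 0 < Real.sqrt c := Real.sqrt_pos.mpr hc
  induction m₂, h12 using Nat.le_induction with
  | base =>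
      have := step_right c C₂ hc hC m₁ h1
      convert this using 2
      push_cast
      field_simp
      congr 1; ring
  | succ m₂ h12 ih =>
      have h1' : c + C₂ * Real.sqrt c ≤ (m₂ : ℝ) := by
        have hm : (m₁ : ℝ) ≤ m₂ := by exact_mod_cast Nat.le_of_succ_le h12
        linarith
      have hstep := step_right c C₂ hc hC m₂ h1'
      calc G c (m₂ + 1) ≤ G c m₂ * Real.exp (-(1 / Real.sqrt c)) := hstep
        _ ≤ (G c m₁ * Real.exp (((m₁ : ℝ) - m₂) / Real.sqrt c)) * Real.exp (-(1 / Real.sqrt c)) :=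
            mul_le_mul_of_nonneg_right ih (Real.exp_nonneg _)
        _ = G c m₁ * Real.exp (((m₁ : ℝ) - ((m₂ : ℕ) + 1 : ℕ)) / Real.sqrt c) := by
            rw [mul_assoc, ← Real.exp_add]
            congr 2
            push_cast
            field_simp
            ring

/-- There are constants `C₁ < 0 < C₂`, independent of `n`, such that:
(i) for grid points `y₁ < y₂ ≤ C₁` one has `f_n(y₁) ≤ f_n(y₂) e^{y₁ - y₂}`;
(ii) for grid points `C₂ ≤ y₁ < y₂` one has `f_n(y₂) ≤ f_n(y₁) e^{y₁ - y₂}`. -/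
theorem fn_exponential_tail_bounds (d : ℕ) (hd : 1 ≤ d) :
    ∃ C₁ C₂ : ℝ, C₁ < 0 ∧ 0 < C₂ ∧
      (∀ n : ℕ, 1 ≤ n → ∀ k₁ k₂ : ℤ,
        gridPt d n k₁ < gridPt d n k₂ → gridPt d n k₂ ≤ C₁ →
          fn d n (gridPt d n k₁) ≤
            fn d n (gridPt d n k₂) * Real.exp (gridPt d n k₁ - gridPt d n k₂)) ∧
      (∀ n : ℕ, 1 ≤ n → ∀ k₁ k₂ : ℤ,
        C₂ ≤ gridPt d n k₁ → gridPt d n k₁ < gridPt d n k₂ →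
          fn d n (gridPt d n k₂) ≤
            fn d n (gridPt d n k₁) * Real.exp (gridPt d n k₁ - gridPt d n k₂)) := by
  refine ⟨-1, Real.exp (Real.sqrt d), by norm_num, Real.exp_pos _, ?_, ?_⟩
  · -- left tail
    intro n hn k₁ k₂ hlt hle
    set c : ℝ := (n : ℝ) / d with hcdef
    have hc : (0 : ℝ) < c := by
      apply div_pos <;> exact_mod_cast Nat.lt_of_lt_of_le Nat.zero_lt_one ‹_›
    have hs : 0 < Real.sqrt c := Real.sqrt_pos.mpr hc
    have hk : k₁ < k₂ := by
      have := (div_lt_div_iff_of_pos_right hs).mp hlt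
      exact_mod_cast sub_lt_sub_iff_right c |>.mp this
    have hdiff : gridPt d n k₁ - gridPt d n k₂ = ((k₁ : ℝ) - k₂) / Real.sqrt c := by
      unfold gridPt
      rw [div_sub_div_same]
      rw [← hcdef]
      ring_nf
    by_cases hk1 : 0 ≤ k₁
    · have hk2 : 0 ≤ k₂ := le_of_lt (lt_of_le_of_lt hk1 hk)
      have e1 : ((k₁.toNat : ℕ) : ℝ) = (k₁ : ℝ) := by
        exact_mod_cast Int.toNat_of_nonneg hk1
      have e2 : ((k₂.toNat : ℕ) : ℝ) = (k₂ : ℝ) := by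
        exact_mod_cast Int.toNat_of_nonneg hk2
      have hk2c : (k₂ : ℝ) ≤ c - Real.sqrt c := by
        have h' : ((k₂ : ℝ) - c) / Real.sqrt c ≤ -1 := hle
        rw [div_le_iff₀ hs] at h'
        linarith
      rw [fn_gridPt d n hd hn k₁, fn_gridPt d n hd hn k₂, if_pos hk1, if_pos hk2, hdiff,
        ← e1, ← e2]
      exact main_left c hc k₁.toNat k₂.toNat (by omega) (by rw [e2]; exact hk2c)
    · rw [fn_gridPt d n hd hn k₁, if_neg hk1]
      exact mul_nonneg (fn_nonneg d n _) (Real.exp_nonneg _)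
  · -- right tail
    intro n hn k₁ k₂ hge hlt
    set c : ℝ := (n : ℝ) / d with hcdef
    have hc : (0 : ℝ) < c := by
      apply div_pos <;> exact_mod_cast Nat.lt_of_lt_of_le Nat.zero_lt_one ‹_›
    have hs : 0 < Real.sqrt c := Real.sqrt_pos.mpr hc
    have hk : k₁ < k₂ := by
      have := (div_lt_div_iff_of_pos_right hs).mp hlt
      exact_mod_cast sub_lt_sub_iff_right c |>.mp this
    have hdiff : gridPt d n k₁ - gridPt d n k₂ = ((k₁ : ℝ) - k₂) / Real.sqrt c := by
      unfold gridPt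
      rw [div_sub_div_same]
      rw [← hcdef]
      ring_nf
    have hk1c : c + Real.exp (Real.sqrt d) * Real.sqrt c ≤ (k₁ : ℝ) := by
      have h' : Real.exp (Real.sqrt d) ≤ ((k₁ : ℝ) - c) / Real.sqrt c := hge
      rw [le_div_iff₀ hs] at h'
      linarith
    have hk1 : 0 ≤ k₁ := by
      have : (0 : ℝ) < (k₁ : ℝ) := by nlinarith [Real.exp_pos (Real.sqrt d)]
      exact_mod_cast this.le
    have hk2 : 0 ≤ k₂ := le_of_lt (lt_of_le_of_lt hk1 hk)
    have e1 : ((k₁.toNat : ℕ) : ℝ) = (k₁ : ℝ) := by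
      exact_mod_cast Int.toNat_of_nonneg hk1
    have e2 : ((k₂.toNat : ℕ) : ℝ) = (k₂ : ℝ) := by
      exact_mod_cast Int.toNat_of_nonneg hk2
    have hinv : 1 / Real.sqrt c ≤ Real.sqrt d := by
      have hdc : (1 : ℝ) ≤ (d : ℝ) * c := by
        have hd0 : ((d : ℝ)) ≠ 0 := by
          exact_mod_cast Nat.pos_of_ne_zero (by omega) |>.ne'
        have : (d : ℝ) * c = n := by rw [hcdef]; field_simp
        rw [this]
        exact_mod_cast hn
      have h1 : (1 : ℝ) ≤ Real.sqrt ((d : ℝ) * c) := by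
        have := Real.sqrt_le_sqrt hdc
        rwa [Real.sqrt_one] at this
      rw [Real.sqrt_mul (by positivity) c] at h1
      rw [div_le_iff₀ hs]
      linarith
    have hC : Real.exp (1 / Real.sqrt c) ≤ 1 + Real.exp (Real.sqrt d) / Real.sqrt c := by
      set x := 1 / Real.sqrt c with hx
      have hx0 : 0 < x := by positivity
      have hmul : Real.exp x * Real.exp (-x) = 1 := by
        rw [← Real.exp_add]; simp
      have h1 : Real.exp x ≤ 1 + x * Real.exp x := by
        nlinarith [Real.add_one_le_exp (-x), Real.exp_pos x, hmul]
      have h2 : x * Real.exp x ≤ x * Real.exp (Real.sqrt d) :=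
        mul_le_mul_of_nonneg_left (Real.exp_le_exp.mpr hinv) hx0.le
      have h3 : x * Real.exp (Real.sqrt d) = Real.exp (Real.sqrt d) / Real.sqrt c := by
        rw [hx]; ring
      linarith
    rw [fn_gridPt d n hd hn k₁, fn_gridPt d n hd hn k₂, if_pos hk1, if_pos hk2, hdiff,
      ← e1, ← e2]
    exact main_right c (Real.exp (Real.sqrt d)) hc hC k₁.toNat k₂.toNat (by omega)
      (by rw [e1]; exact hk1c)
end

section
/- Let A be a random 2 × 2 Hermitian matrix distributed according to the Gaussian measure with density (1/Z₂) e^{−(1/2) Tr H²} with respect to Lebesgue measure on 2 × 2 Hermitian matrices, and let B = A − (Tr A / 2) · I be the corresponding 2 × 2 traceless GUE random matrix. Let x₁ denote the largest eigenvalue of B. Then the random variable 2 · x₁² = Tr B² is distributed according to the chi-squared distribution with 3 degrees of freedom; equivalently, √2 · x₁ is distributed as the Euclidean norm of a standard Gaussian random vector in ℝ³. -/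
open Finset MeasureTheory

noncomputable instance matrixComplexMeasurableSpace (d : ℕ) :
    MeasurableSpace (Matrix (Fin d) (Fin d) ℂ) :=
  (inferInstance : MeasurableSpace (Fin d → Fin d → ℂ))

/-- The real-linear parametrization of the space of `d × d` Hermitian matrices by `d²` real
coordinates: `X i i` are the diagonal entries, and for `i < j` the entry `(i,j)` is
`X i j + 𝑖 X j i`. Lebesgue measure on the space of Hermitian matrices corresponds under
this parametrization (up to a constant factor, absorbed in normalizing constants) to
Lebesgue measure on the coordinates. -/
noncomputable def hermOfReal (d : ℕ) (X : Fin d → Fin d → ℝ) : Matrix (Fin d) (Fin d) ℂ :=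
  Matrix.of fun i j =>
    if i = j then (X i i : ℂ)
    else if i < j then (X i j : ℂ) + (X j i : ℂ) * Complex.I
    else (X j i : ℂ) - (X i j : ℂ) * Complex.I

/-- The Gaussian Unitary Ensemble: the probability measure on (the space of) `d × d`
Hermitian matrices with density `(1/Z) e^{-(1/2) Tr H²}` with respect to Lebesgue measure,
written via the parametrization `hermOfReal`. `Z` is the normalizing constant. -/
noncomputable def gueMeasure (d : ℕ) (Z : ℝ) : Measure (Matrix (Fin d) (Fin d) ℂ) :=
  Measure.map (hermOfReal d)
    (volume.withDensity fun X : Fin d → Fin d → ℝ =>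
      ENNReal.ofReal
        ((1 / Z) * Real.exp (-(Matrix.trace (hermOfReal d X ^ 2)).re / 2)))

/-- The traceless part `A - (Tr A / d) · 1` of a `d × d` matrix `A`. -/
noncomputable def traceless (d : ℕ) (A : Matrix (Fin d) (Fin d) ℂ) :
    Matrix (Fin d) (Fin d) ℂ :=
  A - (Matrix.trace A / d) • (1 : Matrix (Fin d) (Fin d) ℂ)

/-- The eigenvalues of a Hermitian matrix, sorted in decreasing order
(`sortedEigenvalues d A 0` is the largest one); junk value `0` for non-Hermitian `A`. -/
noncomputable def sortedEigenvalues (d : ℕ) (A : Matrix (Fin d) (Fin d) ℂ) :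
    Fin d → ℝ :=
  if h : A.IsHermitian then fun i => h.eigenvalues (Tuple.sort h.eigenvalues i.rev)
  else 0

/-- The chi-squared distribution with 3 degrees of freedom: the law of `Z₁² + Z₂² + Z₃²`
for independent standard normal random variables `Z₁, Z₂, Z₃`, i.e. the law of the squared
Euclidean norm of a standard Gaussian random vector in `ℝ³`. -/
noncomputable def chiSquared3 : Measure ℝ :=
  Measure.map (fun z : Fin 3 → ℝ => ∑ i, (z i) ^ 2)
    (Measure.pi fun _ : Fin 3 => ProbabilityTheory.gaussianReal 0 1)

namespace GUEAux

open ProbabilityTheory Real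
open scoped ENNReal

/-! ### generic measure lemmas -/

lemma map_withDensity_comp {α β : Type*} [MeasurableSpace α] [MeasurableSpace β]
    (μ : Measure α) {f : α → β} (hf : Measurable f) {g : β → ℝ≥0∞} (hg : Measurable g) :
    Measure.map f (μ.withDensity (g ∘ f)) = (Measure.map f μ).withDensity g := by
  ext s hs
  rw [Measure.map_apply hf hs, withDensity_apply _ (hf hs), withDensity_apply _ hs,
    setLIntegral_map hs hg hf]
  rfl

lemma prod_withDensity {α β : Type*} [MeasurableSpace α] [MeasurableSpace β]
    (μ : Measure α) (ν : Measure β) [SigmaFinite μ] [SigmaFinite ν]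
    {f : α → ℝ≥0∞} {g : β → ℝ≥0∞} (hf : Measurable f) (hg : Measurable g)
    [SigmaFinite (μ.withDensity f)] [SigmaFinite (ν.withDensity g)] :
    (μ.withDensity f).prod (ν.withDensity g)
      = (μ.prod ν).withDensity (fun p => f p.1 * g p.2) := by
  refine Measure.prod_eq fun s t hs ht => ?_
  rw [withDensity_apply _ (hs.prod ht), ← lintegral_indicator (hs.prod ht)]
  have : ∀ p : α × β, (s ×ˢ t).indicator (fun p => f p.1 * g p.2) p
      = (s.indicator f p.1) * (t.indicator g p.2) := by
    intro p
    by_cases h1 : p.1 ∈ s <;> by_cases h2 : p.2 ∈ t <;>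
      simp [Set.indicator, Set.mem_prod, h1, h2]
  simp_rw [this]
  rw [lintegral_prod_mul (hf.indicator hs).aemeasurable (hg.indicator ht).aemeasurable,
    lintegral_indicator hs, lintegral_indicator ht,
    ← withDensity_apply _ hs, ← withDensity_apply _ ht]

lemma pi_gauss (n : ℕ) :
    (volume : Measure (Fin n → ℝ)).withDensity (fun y => ∏ i, gaussianPDF 0 1 (y i))
      = Measure.pi fun _ : Fin n => gaussianReal 0 1 := by
  induction n with
  | zero =>
      rw [show (fun y : Fin 0 → ℝ => ∏ i, gaussianPDF 0 1 (y i)) = 1 by funext y; simp,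
        withDensity_one, volume_pi, Measure.pi_of_empty, Measure.pi_of_empty]
  | succ n IH =>
      have hgm : Measurable (fun y : Fin n → ℝ => ∏ i, gaussianPDF 0 1 (y i)) :=
        Finset.measurable_prod _ fun i _ =>
          (measurable_gaussianPDF 0 1).comp (measurable_pi_apply i)
      have hgm' : Measurable (fun y : Fin (n+1) → ℝ => ∏ i, gaussianPDF 0 1 (y i)) :=
        Finset.measurable_prod _ fun i _ =>
          (measurable_gaussianPDF 0 1).comp (measurable_pi_apply i)
      have hG : gaussianReal 0 1 = (volume : Measure ℝ).withDensity (gaussianPDF 0 1) :=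
        gaussianReal_of_var_ne_zero 0 one_ne_zero
      haveI i1 : SigmaFinite ((volume : Measure ℝ).withDensity (gaussianPDF 0 1)) := by
        rw [← hG]; infer_instance
      haveI i2 : SigmaFinite ((volume : Measure (Fin n → ℝ)).withDensity
          fun y => ∏ i, gaussianPDF 0 1 (y i)) := by
        rw [IH]; infer_instance
      set e := MeasurableEquiv.piFinSuccAbove (fun _ : Fin (n+1) => ℝ) 0 with he
      have hmp : MeasurePreserving e (Measure.pi fun _ : Fin (n+1) => gaussianReal 0 1)
          ((gaussianReal 0 1).prod (Measure.pi fun _ : Fin n => gaussianReal 0 1)) :=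
        measurePreserving_piFinSuccAbove (fun _ : Fin (n+1) => gaussianReal 0 1) 0
      have hv : MeasurePreserving e
          (volume : Measure (Fin (n+1) → ℝ))
          ((volume : Measure ℝ).prod (volume : Measure (Fin n → ℝ))) :=
        measurePreserving_piFinSuccAbove (fun _ => volume) 0
      have key : ((fun y : Fin (n+1) → ℝ => ∏ i, gaussianPDF 0 1 (y i)) ∘ e.symm)
          = (fun p : ℝ × (Fin n → ℝ) =>
              gaussianPDF 0 1 p.1 * ∏ i, gaussianPDF 0 1 (p.2 i)) := by
        funext p
        simp [he, MeasurableEquiv.piFinSuccAbove, Fin.prod_univ_succ, Fin.insertNth_zero']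
      calc (volume : Measure (Fin (n+1) → ℝ)).withDensity
              (fun y => ∏ i, gaussianPDF 0 1 (y i))
          = (Measure.map e.symm ((volume : Measure ℝ).prod
              (volume : Measure (Fin n → ℝ)))).withDensity
              (fun y => ∏ i, gaussianPDF 0 1 (y i)) := by
            rw [(hv.symm e).map_eq]
        _ = Measure.map e.symm ((((volume : Measure ℝ).prod
              (volume : Measure (Fin n → ℝ)))).withDensity
              ((fun y => ∏ i, gaussianPDF 0 1 (y i)) ∘ e.symm)) := by
            rw [map_withDensity_comp _ e.symm.measurable hgm']
        _ = Measure.map e.symm (((volume : Measure ℝ).withDensity (gaussianPDF 0 1)).prod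
              ((volume : Measure (Fin n → ℝ)).withDensity
                (fun y => ∏ i, gaussianPDF 0 1 (y i)))) := by
            rw [key, prod_withDensity _ _ (measurable_gaussianPDF 0 1) hgm]
        _ = Measure.map e.symm ((gaussianReal 0 1).prod
              (Measure.pi fun _ : Fin n => gaussianReal 0 1)) := by rw [← hG, IH]
        _ = Measure.pi fun _ : Fin (n+1) => gaussianReal 0 1 := (hmp.symm e).map_eq

lemma map_tail_sq :
    Measure.map (fun y : Fin 4 → ℝ => ∑ i : Fin 3, (y i.succ)^2)
      (Measure.pi fun _ : Fin 4 => gaussianReal 0 1) = chiSquared3 := by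
  set e := MeasurableEquiv.piFinSuccAbove (fun _ : Fin 4 => ℝ) 0 with he
  have hmp : MeasurePreserving e (Measure.pi fun _ : Fin 4 => gaussianReal 0 1)
      ((gaussianReal 0 1).prod (Measure.pi fun _ : Fin 3 => gaussianReal 0 1)) :=
    measurePreserving_piFinSuccAbove (fun _ : Fin 4 => gaussianReal 0 1) 0
  have hfun : (fun y : Fin 4 → ℝ => ∑ i : Fin 3, (y i.succ)^2)
      = (fun z : Fin 3 → ℝ => ∑ i, (z i)^2) ∘ (Prod.snd ∘ e) := by
    funext y
    simp [he, MeasurableEquiv.piFinSuccAbove, Fin.zero_succAbove, Fin.tail]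
  have hsum : Measurable (fun z : Fin 3 → ℝ => ∑ i, (z i)^2) :=
    Finset.measurable_sum _ fun i _ => ((measurable_pi_apply i).pow_const 2)
  rw [hfun, ← Measure.map_map hsum (measurable_snd.comp e.measurable),
    ← Measure.map_map measurable_snd e.measurable, hmp.map_eq, Measure.map_snd_prod]
  simp [chiSquared3]

/-! ### the density on `Fin 4 → ℝ` -/

lemma wd_gauss4 (Z : ℝ) (hZ : 0 < Z) :
    (volume : Measure (Fin 4 → ℝ)).withDensity
        (fun y => ENNReal.ofReal ((1/Z) * Real.exp (-(∑ i, (y i)^2)/2)))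
      = ENNReal.ofReal ((2*Real.pi)^2/Z) • Measure.pi fun _ : Fin 4 => gaussianReal 0 1 := by
  have hgm4 : Measurable (fun y : Fin 4 → ℝ => ∏ i, gaussianPDF 0 1 (y i)) :=
    Finset.measurable_prod _ fun i _ =>
      (measurable_gaussianPDF 0 1).comp (measurable_pi_apply i)
  rw [← pi_gauss 4, ← withDensity_smul _ hgm4]
  congr 1
  funext y
  have hπ : (0:ℝ) < 2*Real.pi := by positivity
  have hs : Real.sqrt (2*Real.pi) ^ 2 = 2*Real.pi := Real.sq_sqrt (le_of_lt hπ)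
  have hprod : ∏ i : Fin 4, gaussianPDFReal 0 1 (y i)
      = ((2*Real.pi)^2)⁻¹ * Real.exp (-(∑ i, (y i)^2)/2) := by
    unfold gaussianPDFReal
    push_cast
    simp only [mul_one, sub_zero]
    rw [Finset.prod_mul_distrib, Finset.prod_const, ← Real.exp_sum]
    congr 1
    · rw [Finset.card_univ, Fintype.card_fin, show (4:ℕ) = 2*2 from rfl, pow_mul,
        inv_pow, hs, inv_pow]
    · congr 1
      rw [← Finset.sum_div, ← Finset.sum_neg_distrib]
  simp only [Pi.smul_apply, smul_eq_mul, gaussianPDF]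
  rw [← ENNReal.ofReal_prod_of_nonneg (fun i _ => gaussianPDFReal_nonneg 0 1 (y i)),
    ← ENNReal.ofReal_mul (by positivity), hprod]
  congr 1
  field_simp


/-! ### Hermitian algebra -/

lemma hermOfReal_isHermitian (d : ℕ) (X : Fin d → Fin d → ℝ) :
    (hermOfReal d X).IsHermitian := by
  rw [Matrix.IsHermitian]
  ext i j
  simp only [Matrix.conjTranspose_apply, hermOfReal, Matrix.of_apply]
  rcases lt_trichotomy i j with h | h | h
  · rw [if_neg h.ne', if_neg (not_lt_of_gt h), if_neg h.ne, if_pos h]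
    simp [Complex.ext_iff]
  · subst h
    simp
  · rw [if_neg h.ne, if_pos h, if_neg h.ne', if_neg (not_lt_of_gt h)]
    simp [Complex.ext_iff]

lemma traceless_isHermitian {A : Matrix (Fin 2) (Fin 2) ℂ} (hA : A.IsHermitian) :
    (traceless 2 A).IsHermitian := by
  have ht : star A.trace = A.trace := by
    conv_rhs => rw [← hA]
    rw [Matrix.trace_conjTranspose]
  unfold traceless
  refine hA.sub ?_
  rw [Matrix.IsHermitian, Matrix.conjTranspose_smul, Matrix.conjTranspose_one]
  congr 1
  rw [star_div₀, ht]
  norm_num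

lemma trace_traceless (A : Matrix (Fin 2) (Fin 2) ℂ) : (traceless 2 A).trace = 0 := by
  simp only [traceless, Matrix.trace_sub, Matrix.trace_smul, Matrix.trace_one,
    Fintype.card_fin, smul_eq_mul, Nat.cast_ofNat]
  ring

lemma trace_eq_sum_eigen {B : Matrix (Fin 2) (Fin 2) ℂ} (hB : B.IsHermitian) :
    B.trace = ∑ i, (hB.eigenvalues i : ℂ) := by
  have hU : (star (hB.eigenvectorUnitary : Matrix (Fin 2) (Fin 2) ℂ)) *
      (hB.eigenvectorUnitary : Matrix (Fin 2) (Fin 2) ℂ) = 1 :=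
    Matrix.mem_unitaryGroup_iff'.mp (hB.eigenvectorUnitary).2
  conv_lhs => rw [hB.spectral_theorem, Unitary.conjStarAlgAut_apply]
  rw [Matrix.trace_mul_comm, ← Matrix.mul_assoc, hU, Matrix.one_mul, Matrix.trace_diagonal]
  rfl

lemma trace_sq_eq_sum_eigen {B : Matrix (Fin 2) (Fin 2) ℂ} (hB : B.IsHermitian) :
    (B ^ 2).trace = ∑ i, (hB.eigenvalues i : ℂ) ^ 2 := by
  have hU : (star (hB.eigenvectorUnitary : Matrix (Fin 2) (Fin 2) ℂ)) *
      (hB.eigenvectorUnitary : Matrix (Fin 2) (Fin 2) ℂ) = 1 :=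
    Matrix.mem_unitaryGroup_iff'.mp (hB.eigenvectorUnitary).2
  set U : Matrix (Fin 2) (Fin 2) ℂ := (hB.eigenvectorUnitary : Matrix (Fin 2) (Fin 2) ℂ)
  set D : Matrix (Fin 2) (Fin 2) ℂ := Matrix.diagonal (RCLike.ofReal ∘ hB.eigenvalues)
  have h1 : B ^ 2 = U * (D * D) * star U := by
    rw [pow_two]
    conv_lhs => rw [hB.spectral_theorem, Unitary.conjStarAlgAut_apply]
    have : (U * D * star U) * (U * D * star U) = U * (D * ((star U * U) * (D * star U))) := by
      simp only [Matrix.mul_assoc]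
    rw [this, hU, Matrix.one_mul]
    simp only [Matrix.mul_assoc]
  rw [h1, Matrix.trace_mul_comm, ← Matrix.mul_assoc, hU, Matrix.one_mul,
    Matrix.diagonal_mul_diagonal, Matrix.trace_diagonal]
  simp [pow_two]

lemma part1 (A : Matrix (Fin 2) (Fin 2) ℂ) (hA : A.IsHermitian) :
    2 * (sortedEigenvalues 2 (traceless 2 A) 0 : ℂ) ^ 2 =
      Matrix.trace (traceless 2 A ^ 2) := by
  have hB := traceless_isHermitian hA
  have hsum : hB.eigenvalues 0 + hB.eigenvalues 1 = 0 := by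
    have h := (trace_eq_sum_eigen hB).symm
    rw [trace_traceless, Fin.sum_univ_two] at h
    exact_mod_cast h
  have h1 : hB.eigenvalues 1 = - hB.eigenvalues 0 := by linarith
  obtain ⟨j, hjeq⟩ : ∃ j : Fin 2,
      sortedEigenvalues 2 (traceless 2 A) 0 = hB.eigenvalues j :=
    ⟨_, by rw [sortedEigenvalues, dif_pos hB]⟩
  rw [trace_sq_eq_sum_eigen hB, Fin.sum_univ_two, hjeq]
  have hj : j = 0 ∨ j = 1 := by omega
  rcases hj with hj | hj <;> subst hj <;> rw [h1] <;> push_cast <;> ring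


/-! ### coordinates -/

lemma herm_entries (X : Fin 2 → Fin 2 → ℝ) :
    hermOfReal 2 X 0 0 = (X 0 0 : ℂ) ∧ hermOfReal 2 X 1 1 = (X 1 1 : ℂ) ∧
    hermOfReal 2 X 0 1 = (X 0 1 : ℂ) + (X 1 0 : ℂ) * Complex.I ∧
    hermOfReal 2 X 1 0 = (X 0 1 : ℂ) - (X 1 0 : ℂ) * Complex.I := by
  refine ⟨?_, ?_, ?_, ?_⟩ <;>
    simp [hermOfReal, show ¬((0:Fin 2) = 1) by decide, show ((0:Fin 2) < 1) by decide,
      show ¬((1:Fin 2) = 0) by decide, show ¬((1:Fin 2) < 0) by decide]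

lemma htrace_herm (X : Fin 2 → Fin 2 → ℝ) :
    Matrix.trace (hermOfReal 2 X) = ((X 0 0 + X 1 1 : ℝ) : ℂ) := by
  obtain ⟨h00, h11, _, _⟩ := herm_entries X
  rw [Matrix.trace]
  simp [Matrix.diag, Fin.sum_univ_two, h00, h11]

lemma trace_sq_herm_re (X : Fin 2 → Fin 2 → ℝ) :
    (Matrix.trace (hermOfReal 2 X ^ 2)).re
      = (X 0 0)^2 + (X 1 1)^2 + 2*(X 0 1)^2 + 2*(X 1 0)^2 := by
  obtain ⟨h00, h11, h01, h10⟩ := herm_entries X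
  rw [pow_two, Matrix.trace]
  simp only [Matrix.diag, Matrix.mul_apply, Fin.sum_univ_two, h00, h01, h10, h11]
  simp only [Complex.add_re, Complex.mul_re, Complex.mul_im, Complex.sub_re, Complex.sub_im,
    Complex.add_im, Complex.ofReal_re, Complex.ofReal_im, Complex.I_re, Complex.I_im]
  ring

lemma trace_sq_sub_smul (M : Matrix (Fin 2) (Fin 2) ℂ) (c : ℂ) :
    Matrix.trace ((M - c • 1) ^ 2)
      = Matrix.trace (M ^ 2) - 2 * c * Matrix.trace M + c^2 * 2 := by
  simp only [pow_two, Matrix.sub_mul, Matrix.mul_sub, Matrix.smul_mul, Matrix.mul_smul,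
    Matrix.one_mul, Matrix.mul_one, Matrix.trace_sub, Matrix.trace_smul, Matrix.trace_one,
    Fintype.card_fin, smul_smul, smul_eq_mul, Nat.cast_ofNat]
  ring

lemma trace_sq_traceless_herm_re (X : Fin 2 → Fin 2 → ℝ) :
    (Matrix.trace (traceless 2 (hermOfReal 2 X) ^ 2)).re
      = (X 0 0 - X 1 1)^2/2 + 2*(X 0 1)^2 + 2*(X 1 0)^2 := by
  simp only [traceless, Nat.cast_ofNat]
  rw [trace_sq_sub_smul, htrace_herm]
  set t : ℝ := X 0 0 + X 1 1 with hts
  have h : Matrix.trace (hermOfReal 2 X ^ 2) - 2*((t:ℂ)/2)*(t:ℂ) + ((t:ℂ)/2)^2*2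
      = Matrix.trace (hermOfReal 2 X ^ 2) + ((-(t^2)/2 : ℝ) : ℂ) := by
    push_cast; ring
  rw [h, Complex.add_re, Complex.ofReal_re, trace_sq_herm_re, hts]
  ring

/-! ### the linear change of variables -/

def E₀ (X : Fin 2 → Fin 2 → ℝ) : Fin 4 → ℝ := ![X 0 0, X 0 1, X 1 0, X 1 1]

noncomputable def M4 : Matrix (Fin 4) (Fin 4) ℝ :=
  !![(Real.sqrt 2)⁻¹, 0, 0, (Real.sqrt 2)⁻¹;
     (Real.sqrt 2)⁻¹, 0, 0, -(Real.sqrt 2)⁻¹;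
     0, Real.sqrt 2, 0, 0;
     0, 0, Real.sqrt 2, 0]

noncomputable def Phi (X : Fin 2 → Fin 2 → ℝ) : Fin 4 → ℝ := Matrix.toLin' M4 (E₀ X)

lemma measurable_E₀ : Measurable E₀ := by
  apply measurable_pi_lambda
  intro k
  fin_cases k
  · exact ((measurable_pi_apply (0 : Fin 2)).comp (measurable_pi_apply (0 : Fin 2)) :
      Measurable fun X : Fin 2 → Fin 2 → ℝ => X 0 0)
  · exact ((measurable_pi_apply (1 : Fin 2)).comp (measurable_pi_apply (0 : Fin 2)) :
      Measurable fun X : Fin 2 → Fin 2 → ℝ => X 0 1)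
  · exact ((measurable_pi_apply (0 : Fin 2)).comp (measurable_pi_apply (1 : Fin 2)) :
      Measurable fun X : Fin 2 → Fin 2 → ℝ => X 1 0)
  · exact ((measurable_pi_apply (1 : Fin 2)).comp (measurable_pi_apply (1 : Fin 2)) :
      Measurable fun X : Fin 2 → Fin 2 → ℝ => X 1 1)

lemma measurable_T : Measurable (Matrix.toLin' M4) :=
  (LinearMap.continuous_of_finiteDimensional _).measurable

lemma measurable_Phi : Measurable Phi := measurable_T.comp measurable_E₀

lemma map_E₀ : Measure.map E₀ (volume : Measure (Fin 2 → Fin 2 → ℝ))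
    = (volume : Measure (Fin 4 → ℝ)) := by
  conv_rhs => rw [volume_pi]
  refine (Measure.pi_eq fun s hs => ?_).symm
  rw [Measure.map_apply measurable_E₀ (MeasurableSet.univ_pi hs)]
  have hpre : E₀ ⁻¹' (Set.univ.pi s)
      = Set.univ.pi fun i : Fin 2 => Set.univ.pi fun j : Fin 2 =>
          (![![s 0, s 1], ![s 2, s 3]] : Fin 2 → Fin 2 → Set ℝ) i j := by
    ext X
    simp only [Set.mem_preimage, Set.mem_pi, Set.mem_univ, true_implies]
    constructor
    · intro h i j
      fin_cases i <;> fin_cases j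
      · exact h 0
      · exact h 1
      · exact h 2
      · exact h 3
    · intro h k
      fin_cases k
      · exact h 0 0
      · exact h 0 1
      · exact h 1 0
      · exact h 1 1
  rw [hpre, volume_pi_pi]
  have : ∀ i : Fin 2, volume (Set.univ.pi fun j : Fin 2 =>
      (![![s 0, s 1], ![s 2, s 3]] : Fin 2 → Fin 2 → Set ℝ) i j)
      = ∏ j : Fin 2, volume ((![![s 0, s 1], ![s 2, s 3]] : Fin 2 → Fin 2 → Set ℝ) i j) :=
    fun i => volume_pi_pi _
  rw [Fin.prod_univ_two, this 0, this 1, Fin.prod_univ_two, Fin.prod_univ_two,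
    Fin.prod_univ_four]
  show volume (s 0) * volume (s 1) * (volume (s 2) * volume (s 3)) = _
  ring

lemma detM4 : M4.det = -2 := by
  have h2 : Real.sqrt 2 * Real.sqrt 2 = 2 := Real.mul_self_sqrt (by norm_num)
  have hinv : (Real.sqrt 2)⁻¹ ^ 2 = (2:ℝ)⁻¹ := by rw [inv_pow, sq, h2]
  have e1 : (![0,0,Real.sqrt 2,0] : Fin 4 → ℝ) (Fin.castSucc 2) = Real.sqrt 2 := rfl
  simp (config := { decide := true }) [M4, Matrix.det_succ_row_zero, Fin.sum_univ_succ,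
    Fin.succAbove, Matrix.submatrix, e1]
  ring_nf
  rw [hinv]
  norm_num

lemma map_T : Measure.map (Matrix.toLin' M4) (volume : Measure (Fin 4 → ℝ))
    = ENNReal.ofReal (1/2) • (volume : Measure (Fin 4 → ℝ)) := by
  rw [Real.map_linearMap_volume_pi_eq_smul_volume_pi
    (by rw [LinearMap.det_toLin', detM4]; norm_num)]
  congr 1
  rw [LinearMap.det_toLin', detM4]
  norm_num

lemma Phi_eval (X : Fin 2 → Fin 2 → ℝ) :
    Phi X = ![(X 0 0 + X 1 1)/Real.sqrt 2, (X 0 0 - X 1 1)/Real.sqrt 2,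
      Real.sqrt 2 * X 0 1, Real.sqrt 2 * X 1 0] := by
  funext k
  fin_cases k <;>
    simp [Phi, M4, E₀, Matrix.toLin'_apply, Matrix.mulVec, dotProduct,
      Fin.sum_univ_four] <;> ring


/-! ### sum-of-squares identities -/

lemma sum_sq_Phi (X : Fin 2 → Fin 2 → ℝ) :
    ∑ i : Fin 4, (Phi X i)^2
      = (X 0 0)^2 + (X 1 1)^2 + 2*(X 0 1)^2 + 2*(X 1 0)^2 := by
  have hs : Real.sqrt 2 ^ 2 = 2 := Real.sq_sqrt (by norm_num)
  rw [Phi_eval, Fin.sum_univ_four]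
  simp only [Matrix.cons_val_zero, Matrix.cons_val_one, Matrix.head_cons,
    Matrix.cons_val_two, Matrix.tail_cons, Matrix.cons_val_three, Matrix.head_fin_const]
  rw [div_pow, div_pow, hs, mul_pow, mul_pow, hs]
  ring

lemma sum3_sq_Phi (X : Fin 2 → Fin 2 → ℝ) :
    ∑ i : Fin 3, (Phi X i.succ)^2
      = (X 0 0 - X 1 1)^2/2 + 2*(X 0 1)^2 + 2*(X 1 0)^2 := by
  have hs : Real.sqrt 2 ^ 2 = 2 := Real.sq_sqrt (by norm_num)
  rw [Fin.sum_univ_three, Phi_eval]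
  simp only [show (Fin.succ 0 : Fin 4) = 1 from rfl, show (Fin.succ 1 : Fin 4) = 2 from rfl,
    show (Fin.succ 2 : Fin 4) = 3 from rfl, Matrix.cons_val_zero, Matrix.cons_val_one, Matrix.head_cons,
    Matrix.cons_val_two, Matrix.tail_cons, Matrix.cons_val_three, Matrix.head_fin_const]
  rw [div_pow, hs, mul_pow, mul_pow, hs]

/-! ### the pushforward of the GUE density under `Phi` -/

lemma map_Phi (Z : ℝ) (hZ : 0 < Z) :
    Measure.map Phi ((volume : Measure (Fin 2 → Fin 2 → ℝ)).withDensity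
        fun X => ENNReal.ofReal
          ((1 / Z) * Real.exp (-(Matrix.trace (hermOfReal 2 X ^ 2)).re / 2)))
      = (ENNReal.ofReal (1/2) * ENNReal.ofReal ((2*Real.pi)^2/Z)) •
          Measure.pi fun _ : Fin 4 => gaussianReal 0 1 := by
  set D4 : (Fin 4 → ℝ) → ℝ≥0∞ :=
    fun y => ENNReal.ofReal ((1/Z) * Real.exp (-(∑ i, (y i)^2)/2)) with hD4def
  have hD4 : Measurable D4 := by
    apply Measurable.ennreal_ofReal
    exact ((Real.measurable_exp.comp
      ((Finset.measurable_sum _ fun i _ =>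
        (measurable_pi_apply i).pow_const 2).neg.div_const 2))).const_mul _
  have hdens : (fun X : Fin 2 → Fin 2 → ℝ =>
      ENNReal.ofReal ((1 / Z) * Real.exp (-(Matrix.trace (hermOfReal 2 X ^ 2)).re / 2)))
      = (D4 ∘ ⇑(Matrix.toLin' M4)) ∘ E₀ := by
    funext X
    have : ((D4 ∘ ⇑(Matrix.toLin' M4)) ∘ E₀) X = D4 (Phi X) := rfl
    rw [this, hD4def]
    simp only [sum_sq_Phi, trace_sq_herm_re]
  rw [hdens]
  have hPhieq : Measure.map Phi ((volume : Measure (Fin 2 → Fin 2 → ℝ)).withDensity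
        ((D4 ∘ ⇑(Matrix.toLin' M4)) ∘ E₀))
      = Measure.map (⇑(Matrix.toLin' M4)) (Measure.map E₀
          ((volume : Measure (Fin 2 → Fin 2 → ℝ)).withDensity
            ((D4 ∘ ⇑(Matrix.toLin' M4)) ∘ E₀))) :=
    (Measure.map_map measurable_T measurable_E₀).symm
  rw [hPhieq, map_withDensity_comp _ measurable_E₀ (hD4.comp measurable_T), map_E₀,
    map_withDensity_comp _ measurable_T hD4, map_T, withDensity_smul_measure,
    hD4def, wd_gauss4 Z hZ, smul_smul]

/-! ### measurability on matrix space -/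

lemma measurable_entry (i j : Fin 2) :
    Measurable fun A : Matrix (Fin 2) (Fin 2) ℂ => A i j :=
  (measurable_pi_apply j).comp (measurable_pi_apply i)

lemma measurable_traceless_entry (i j : Fin 2) :
    Measurable fun A : Matrix (Fin 2) (Fin 2) ℂ => traceless 2 A i j := by
  have : (fun A : Matrix (Fin 2) (Fin 2) ℂ => traceless 2 A i j)
      = fun A => A i j - (A 0 0 + A 1 1) / ((2:ℕ):ℂ) * (1 : Matrix (Fin 2) (Fin 2) ℂ) i j := by
    funext A
    simp only [traceless, Matrix.sub_apply, Matrix.smul_apply, smul_eq_mul, Matrix.trace,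
      Matrix.diag, Fin.sum_univ_two]
  rw [this]
  exact (measurable_entry i j).sub
    ((((measurable_entry 0 0).add (measurable_entry 1 1)).div_const _).mul_const _)

lemma measurable_g' :
    Measurable fun A : Matrix (Fin 2) (Fin 2) ℂ => (Matrix.trace (traceless 2 A ^ 2)).re := by
  have h : (fun A : Matrix (Fin 2) (Fin 2) ℂ => Matrix.trace (traceless 2 A ^ 2))
      = fun A => ∑ i : Fin 2, ∑ j : Fin 2, traceless 2 A i j * traceless 2 A j i := by
    funext A
    rw [pow_two, Matrix.trace]
    simp [Matrix.diag, Matrix.mul_apply]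
  exact Complex.measurable_re.comp (h ▸ (Finset.measurable_sum _ fun i _ =>
    Finset.measurable_sum _ fun j _ =>
      (measurable_traceless_entry i j).mul (measurable_traceless_entry j i)))

lemma measurable_hermOfReal : Measurable (hermOfReal 2) := by
  apply measurable_pi_lambda
  intro i
  apply measurable_pi_lambda
  intro j
  simp only [hermOfReal, Matrix.of_apply]
  have me : ∀ a b : Fin 2, Measurable fun X : Fin 2 → Fin 2 → ℝ => ((X a b : ℝ) : ℂ) :=
    fun a b => Complex.measurable_ofReal.comp
      ((measurable_pi_apply b).comp (measurable_pi_apply a))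
  split_ifs
  · exact me i i
  · exact (me i j).add ((me j i).mul_const _)
  · exact (me j i).sub ((me i j).mul_const _)

lemma measurableSet_isHermitian :
    MeasurableSet {A : Matrix (Fin 2) (Fin 2) ℂ | A.IsHermitian} := by
  have : {A : Matrix (Fin 2) (Fin 2) ℂ | A.IsHermitian}
      = ⋂ i, ⋂ j, {A : Matrix (Fin 2) (Fin 2) ℂ | star (A j i) - A i j = 0} := by
    ext A
    simp only [Set.mem_setOf_eq, Set.mem_iInter, Matrix.IsHermitian, sub_eq_zero]
    constructor
    · intro h i j
      conv_rhs => rw [← h]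
      rfl
    · intro h
      ext i j
      exact h i j
  rw [this]
  exact MeasurableSet.iInter fun i => MeasurableSet.iInter fun j =>
    (((Complex.continuous_conj.measurable.comp (measurable_entry j i)).sub (measurable_entry i j)))
      (measurableSet_singleton 0)

end GUEAux

/-- Let `A` be a `2 × 2` GUE random matrix (law `gueMeasure 2 Z`, `Z` the normalizing
constant) and `B = A - (Tr A / 2) · 1` the corresponding traceless GUE matrix, with largest
eigenvalue `x₁`. Then `2 x₁² = Tr B²`, and the random variable `2 x₁²` is distributed
according to the chi-squared distribution with 3 degrees of freedom. -/
theorem tracelessGUE_two_by_two_chiSquared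
    (Z : ℝ) (hZ : 0 < Z) (hprob : IsProbabilityMeasure (gueMeasure 2 Z)) :
    (∀ A : Matrix (Fin 2) (Fin 2) ℂ, A.IsHermitian →
      2 * (sortedEigenvalues 2 (traceless 2 A) 0 : ℂ) ^ 2 =
        Matrix.trace (traceless 2 A ^ 2)) ∧
    Measure.map (fun A => 2 * (sortedEigenvalues 2 (traceless 2 A) 0) ^ 2)
        (gueMeasure 2 Z) = chiSquared3 := by
  classical
  refine ⟨GUEAux.part1, ?_⟩
  set ρ : Measure (Fin 2 → Fin 2 → ℝ) :=
    (volume.withDensity fun X : Fin 2 → Fin 2 → ℝ =>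
      ENNReal.ofReal ((1 / Z) * Real.exp (-(Matrix.trace (hermOfReal 2 X ^ 2)).re / 2)))
    with hρ
  have hgue : gueMeasure 2 Z = Measure.map (hermOfReal 2) ρ := by rw [hρ]; rfl
  have hnull : gueMeasure 2 Z {A | ¬ A.IsHermitian} = 0 := by
    rw [hgue, show {A : Matrix (Fin 2) (Fin 2) ℂ | ¬ A.IsHermitian}
        = {A : Matrix (Fin 2) (Fin 2) ℂ | A.IsHermitian}ᶜ from rfl,
      Measure.map_apply GUEAux.measurable_hermOfReal
        GUEAux.measurableSet_isHermitian.compl]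
    have hempty : (hermOfReal 2) ⁻¹' {A : Matrix (Fin 2) (Fin 2) ℂ | A.IsHermitian}ᶜ = ∅ := by
      ext X
      simp [GUEAux.hermOfReal_isHermitian 2 X]
    rw [hempty]
    simp
  have hae : (fun A => 2 * (sortedEigenvalues 2 (traceless 2 A) 0) ^ 2)
      =ᵐ[gueMeasure 2 Z] (fun A => (Matrix.trace (traceless 2 A ^ 2)).re) := by
    have hherm : ∀ᵐ A ∂(gueMeasure 2 Z), A.IsHermitian := by
      rw [ae_iff]; exact hnull
    filter_upwards [hherm] with A hA
    have h := GUEAux.part1 A hA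
    have h2 : ((2 * (sortedEigenvalues 2 (traceless 2 A) 0) ^ 2 : ℝ) : ℂ)
        = Matrix.trace (traceless 2 A ^ 2) := by push_cast; exact h
    rw [← h2, Complex.ofReal_re]
  rw [Measure.map_congr hae]
  have hcomp : Measure.map (fun A => (Matrix.trace (traceless 2 A ^ 2)).re) (gueMeasure 2 Z)
      = Measure.map ((fun A : Matrix (Fin 2) (Fin 2) ℂ =>
          (Matrix.trace (traceless 2 A ^ 2)).re) ∘ hermOfReal 2) ρ := by
    rw [hgue, Measure.map_map GUEAux.measurable_g' GUEAux.measurable_hermOfReal]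
  rw [hcomp]
  have hF : ((fun A : Matrix (Fin 2) (Fin 2) ℂ =>
        (Matrix.trace (traceless 2 A ^ 2)).re) ∘ hermOfReal 2)
      = (fun y : Fin 4 → ℝ => ∑ i : Fin 3, (y i.succ)^2) ∘ GUEAux.Phi := by
    funext X
    simp only [Function.comp_apply, GUEAux.trace_sq_traceless_herm_re, GUEAux.sum3_sq_Phi]
  rw [hF]
  have htail : Measurable (fun y : Fin 4 → ℝ => ∑ i : Fin 3, (y i.succ)^2) :=
    Finset.measurable_sum _ fun i _ => (measurable_pi_apply i.succ).pow_const 2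
  have hmass : ρ Set.univ = 1 := by
    have h1 := hprob.measure_univ
    rw [hgue, Measure.map_apply GUEAux.measurable_hermOfReal MeasurableSet.univ,
      Set.preimage_univ] at h1
    exact h1
  have hconst : (ENNReal.ofReal (1/2) * ENNReal.ofReal ((2*Real.pi)^2/Z)) = 1 := by
    have h2 : (Measure.map GUEAux.Phi ρ) Set.univ = ρ Set.univ := by
      rw [Measure.map_apply GUEAux.measurable_Phi MeasurableSet.univ, Set.preimage_univ]
    rw [hρ, GUEAux.map_Phi Z hZ] at h2
    rw [← hρ, hmass] at h2
    simpa using h2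
  rw [← Measure.map_map htail GUEAux.measurable_Phi, hρ, GUEAux.map_Phi Z hZ,
    Measure.map_smul, hconst, one_smul, GUEAux.map_tail_sq]
end
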